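/- arXiv:1604.04876 — 10 statements merged into one kernel-verified Lean document; each statement's English description precedes it below -/
import Mathlib

section
/- Let s and b be independent nonnegative integrable real-valued random variables, and let M be a median of s satisfying P(s ≤ M) = 1/2 and P(s < M) = 1/2. Then the expected welfare of the fixed-price mechanism with price M is at least half the optimal efficiency: E[s + (b − s)·𝟙{s ≤ M ∧ M ≤ b}] ≥ (1/2)·E[max(s, b)]. -/
open MeasureTheory ProbabilityTheory

/-- **Median mechanism guarantees half of the optimal efficiency.**
If `s` and `b` are independent nonnegative integrable random variables and `M`
is a median of `s` (with `P(s ≤ M) = P(s < M) = 1/2`), then the fixed-price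
mechanism with price `M` (trading iff `s ≤ M ≤ b`) achieves expected welfare
at least half of `E[max(s, b)]`. -/
theorem median_mechanism_half_of_optimal
    {Ω : Type*} [MeasurableSpace Ω] {P : Measure Ω} [IsProbabilityMeasure P]
    (s b : Ω → ℝ) (hsm : Measurable s) (hbm : Measurable b)
    (hindep : IndepFun s b P)
    (hs0 : ∀ ω, 0 ≤ s ω) (hb0 : ∀ ω, 0 ≤ b ω)
    (hsi : Integrable s P) (hbi : Integrable b P)
    (M : ℝ)
    (hM1 : P {ω | s ω ≤ M} = 1/2)
    (hM2 : P {ω | s ω < M} = 1/2) :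
    ∫ ω, (s ω + (b ω - s ω) * (if s ω ≤ M ∧ M ≤ b ω then (1:ℝ) else 0)) ∂P
      ≥ (1/2) * ∫ ω, max (s ω) (b ω) ∂P := by
  classical
  -- notation
  set I1 : Ω → ℝ := fun ω => if s ω ≤ M then (1:ℝ) else 0 with hI1def
  set I2 : Ω → ℝ := fun ω => if M ≤ b ω then (1:ℝ) else 0 with hI2def
  set G : Ω → ℝ := fun ω => max (b ω - M) 0 with hGdef
  set H : Ω → ℝ := fun ω => max (M - s ω) 0 with hHdef
  -- M ≥ 0
  have hM0 : 0 ≤ M := by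
    by_contra h
    push_neg at h
    have : {ω | s ω ≤ M} = (∅ : Set Ω) := by
      ext ω; simp only [Set.mem_setOf_eq, Set.mem_empty_iff_false, iff_false, not_le]
      exact lt_of_lt_of_le h (hs0 ω)
    rw [this, measure_empty] at hM1
    rw [eq_comm, ENNReal.div_eq_zero_iff] at hM1
    simp at hM1
  -- measurable sets
  have hms1 : MeasurableSet {ω | s ω ≤ M} := hsm measurableSet_Iic
  have hms2 : MeasurableSet {ω | M ≤ b ω} := hbm measurableSet_Ici
  have hms3 : MeasurableSet {ω | M ≤ s ω} := hsm measurableSet_Ici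
  -- indicator rewrites
  have hI1ind : I1 = Set.indicator {ω | s ω ≤ M} (fun _ => (1:ℝ)) := by
    funext ω; simp [hI1def, Set.indicator_apply]
  have hI2ind : I2 = Set.indicator {ω | M ≤ b ω} (fun _ => (1:ℝ)) := by
    funext ω; simp [hI2def, Set.indicator_apply]
  -- integrability
  have hI1int : Integrable I1 P := by
    rw [hI1ind]; exact (integrable_const (1:ℝ)).indicator hms1
  have hI2int : Integrable I2 P := by
    rw [hI2ind]; exact (integrable_const (1:ℝ)).indicator hms2
  have hGint : Integrable G P := (hbi.sub (integrable_const M)).pos_part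
  have hHint : Integrable H P := ((integrable_const M).sub hsi).pos_part
  -- independence of transformed pairs
  have hφ1 : Measurable (fun x : ℝ => if x ≤ M then (1:ℝ) else 0) := by
    apply Measurable.ite measurableSet_Iic measurable_const measurable_const
  have hφ2 : Measurable (fun y : ℝ => if M ≤ y then (1:ℝ) else 0) := by
    apply Measurable.ite measurableSet_Ici measurable_const measurable_const
  have hψG : Measurable (fun y : ℝ => max (y - M) 0) :=
    (measurable_id.sub measurable_const).max measurable_const
  have hψH : Measurable (fun x : ℝ => max (M - x) 0) :=
    (measurable_const.sub measurable_id).max measurable_const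
  have hind1 : IndepFun I1 G P := hindep.comp hφ1 hψG
  have hind2 : IndepFun H I2 P := hindep.comp hψH hφ2
  have hint1 : Integrable (I1 * G) P := hind1.integrable_mul hI1int hGint
  have hint2 : Integrable (H * I2) P := hind2.integrable_mul hHint hI2int
  -- probabilities
  have hp1 : ∫ ω, I1 ω ∂P = 1/2 := by
    rw [hI1ind]
    rw [show (fun _ : Ω => (1:ℝ)) = (1 : Ω → ℝ) from rfl]
    rw [integral_indicator_one hms1, measureReal_def, hM1]
    simp [ENNReal.toReal_div]
  have hPs : P {ω | M ≤ s ω} = 1/2 := by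
    have hc : {ω | M ≤ s ω} = {ω | s ω < M}ᶜ := by
      ext ω; simp [not_lt]
    have hlt : MeasurableSet {ω | s ω < M} := hsm measurableSet_Iio
    rw [hc, measure_compl hlt (measure_ne_top _ _), measure_univ, hM2]
    exact ENNReal.sub_eq_of_eq_add (by norm_num) (ENNReal.add_halves 1).symm
  -- key pointwise identity
  have key : ∀ ω, (b ω - s ω) * (if s ω ≤ M ∧ M ≤ b ω then (1:ℝ) else 0)
      = I1 ω * G ω + H ω * I2 ω := by
    intro ω
    by_cases h1 : s ω ≤ M <;> by_cases h2 : M ≤ b ω <;>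
      simp only [hI1def, hI2def, hGdef, hHdef, h1, h2, true_and, and_true, false_and,
        and_false, if_true, if_false, mul_zero, zero_mul, mul_one, one_mul]
    · rw [max_eq_left (by linarith), max_eq_left (by linarith)]; ring
    · rw [max_eq_right (by linarith)]; ring
    · rw [max_eq_right (by linarith)]; ring
    · ring
  -- rewrite the welfare integral
  have hint1' : Integrable (fun ω => I1 ω * G ω) P := hint1
  have hint2' : Integrable (fun ω => H ω * I2 ω) P := hint2
  have hint12 : Integrable (fun ω => I1 ω * G ω + H ω * I2 ω) P := hint1'.add hint2'
  have e0 : ∫ ω, (s ω + (b ω - s ω) * (if s ω ≤ M ∧ M ≤ b ω then (1:ℝ) else 0)) ∂P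
      = ∫ ω, (s ω + (I1 ω * G ω + H ω * I2 ω)) ∂P := by
    congr 1; funext ω; rw [key ω]
  have e1 : ∫ ω, (s ω + (I1 ω * G ω + H ω * I2 ω)) ∂P
      = ∫ ω, s ω ∂P + ∫ ω, (I1 ω * G ω + H ω * I2 ω) ∂P := integral_add hsi hint12
  have e2 : ∫ ω, (I1 ω * G ω + H ω * I2 ω) ∂P
      = ∫ ω, I1 ω * G ω ∂P + ∫ ω, H ω * I2 ω ∂P := integral_add hint1' hint2'
  have e3 : ∫ ω, I1 ω * G ω ∂P = (∫ ω, I1 ω ∂P) * ∫ ω, G ω ∂P :=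
    hind1.integral_fun_mul_eq_mul_integral hI1int.aestronglyMeasurable hGint.aestronglyMeasurable
  have e4 : ∫ ω, H ω * I2 ω ∂P = (∫ ω, H ω ∂P) * ∫ ω, I2 ω ∂P :=
    hind2.integral_fun_mul_eq_mul_integral hHint.aestronglyMeasurable hI2int.aestronglyMeasurable
  have hwelf : ∫ ω, (s ω + (b ω - s ω) * (if s ω ≤ M ∧ M ≤ b ω then (1:ℝ) else 0)) ∂P
      = ∫ ω, s ω ∂P + ((∫ ω, I1 ω ∂P) * (∫ ω, G ω ∂P) + (∫ ω, H ω ∂P) * (∫ ω, I2 ω ∂P)) := by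
    rw [e0, e1, e2, e3, e4]
  -- bounds
  set S := ∫ ω, s ω ∂P with hSdef
  set A := ∫ ω, G ω ∂P with hAdef
  set Hh := ∫ ω, H ω ∂P with hHhdef
  set q := ∫ ω, I2 ω ∂P with hqdef
  have hA0 : 0 ≤ A := integral_nonneg fun ω => le_max_right _ _
  have hHh0 : 0 ≤ Hh := integral_nonneg fun ω => le_max_right _ _
  have hq0 : 0 ≤ q := integral_nonneg fun ω => by
    simp only [hI2def]; split <;> norm_num
  -- S ≥ M/2
  have hSl : M / 2 ≤ S := by
    have hIint : Integrable (fun ω => M * (if M ≤ s ω then (1:ℝ) else 0)) P := by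
      apply Integrable.const_mul
      have : (fun ω => if M ≤ s ω then (1:ℝ) else 0)
          = Set.indicator {ω | M ≤ s ω} (fun _ => (1:ℝ)) := by
        funext ω; simp [Set.indicator_apply]
      rw [this]; exact (integrable_const (1:ℝ)).indicator hms3
    have hmono : ∀ ω, M * (if M ≤ s ω then (1:ℝ) else 0) ≤ s ω := by
      intro ω; split
      · simpa using ‹M ≤ s ω›
      · simpa using hs0 ω
    have := integral_mono hIint hsi hmono
    rw [integral_const_mul] at this
    have heq : ∫ ω, (if M ≤ s ω then (1:ℝ) else 0) ∂P = 1/2 := by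
      have h2 : (fun ω => if M ≤ s ω then (1:ℝ) else 0)
          = Set.indicator {ω | M ≤ s ω} (1 : Ω → ℝ) := by
        funext ω; simp [Set.indicator_apply]
      rw [h2, integral_indicator_one hms3, measureReal_def, hPs]
      simp [ENNReal.toReal_div]
    rw [heq] at this
    linarith
  -- Hh ≤ M/2
  have hHl : Hh ≤ M / 2 := by
    have hIint : Integrable (fun ω => M * I1 ω) P := hI1int.const_mul M
    have hmono : ∀ ω, H ω ≤ M * I1 ω := by
      intro ω
      simp only [hHdef, hI1def]
      split
      · rw [mul_one]; exact max_le (by linarith [hs0 ω]) hM0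
      · rw [mul_zero]; rename_i h; push_neg at h
        exact max_le (by linarith) le_rfl
    have := integral_mono hHint hIint hmono
    rw [integral_const_mul, hp1] at this
    linarith
  -- OPT ≤ S + A + Hh
  have hOPT : ∫ ω, max (s ω) (b ω) ∂P ≤ S + A + Hh := by
    have hmono : ∀ ω, max (s ω) (b ω) ≤ s ω + G ω + H ω := by
      intro ω
      simp only [hGdef, hHdef]
      rcases le_total (b ω) (s ω) with h | h
      · rw [max_eq_left h]
        have := le_max_right (b ω - M) (0:ℝ)
        have := le_max_right (M - s ω) (0:ℝ)
        linarith
      · rw [max_eq_right h]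
        have h1 := le_max_left (b ω - M) (0:ℝ)
        have h2 := le_max_left (M - s ω) (0:ℝ)
        have h3 := le_max_right (b ω - M) (0:ℝ)
        have h4 := le_max_right (M - s ω) (0:ℝ)
        rcases le_total M (b ω) with hb | hb <;> rcases le_total (s ω) M with hs | hs <;>
          linarith
    have hmax : Integrable (fun ω => max (s ω) (b ω)) P := hsi.sup hbi
    have haddint : Integrable (fun ω => s ω + G ω + H ω) P := (hsi.add hGint).add hHint
    have h := integral_mono hmax haddint hmono
    have hsG : Integrable (fun ω => s ω + G ω) P := hsi.add hGint
    have h2a : ∫ ω, (s ω + G ω + H ω) ∂P = ∫ ω, (s ω + G ω) ∂P + ∫ ω, H ω ∂P :=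
      integral_add hsG hHint
    have h2b : ∫ ω, (s ω + G ω) ∂P = S + A := integral_add hsi hGint
    have h2 : ∫ ω, (s ω + G ω + H ω) ∂P = S + A + Hh := by rw [h2a, h2b]
    linarith [h, h2.le, h2.ge]
  -- conclude
  rw [hwelf, hp1]
  have hq1 : Hh * q ≥ 0 := mul_nonneg hHh0 hq0
  have h := hOPT
  nlinarith [hSl, hHl, hA0, hHh0, hq1, h]
end

section
/- Let s and b be independent nonnegative integrable real-valued random variables with E[b] > 0, and let W be a real number satisfying E[b·𝟙{b < W}] = E[b·𝟙{b ≥ W}] (so each side equals E[b]/2). Then the expected welfare of the fixed-price mechanism with price W is at least half the optimal efficiency: E[s + (b − s)·𝟙{s ≤ W ∧ W ≤ b}] ≥ (1/2)·E[max(s, b)]. -/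
open MeasureTheory ProbabilityTheory

section Aux

variable {Ω : Type*} [MeasurableSpace Ω] {P : Measure Ω} [IsProbabilityMeasure P]

private lemma integrable_dom {g f : Ω → ℝ} (hg : Integrable g P)
    (hf : AEStronglyMeasurable f P) (h : ∀ ω, |f ω| ≤ |g ω|) : Integrable f P :=
  hg.mono hf (Filter.Eventually.of_forall h)

end Aux

set_option maxHeartbeats 1000000 in
/-- **Weighted median mechanism guarantees half of the optimal efficiency.**
If `s` and `b` are independent nonnegative integrable random variables with
`E[b] > 0` and `W` satisfies `E[b·𝟙{b < W}] = E[b·𝟙{b ≥ W}]`, then the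
fixed-price mechanism with price `W` achieves at least half of `E[max(s,b)]`. -/
theorem weighted_median_mechanism_half_of_optimal
    {Ω : Type*} [MeasurableSpace Ω] {P : Measure Ω} [IsProbabilityMeasure P]
    (s b : Ω → ℝ) (hsm : Measurable s) (hbm : Measurable b)
    (hindep : IndepFun s b P)
    (hs0 : ∀ ω, 0 ≤ s ω) (hb0 : ∀ ω, 0 ≤ b ω)
    (hsi : Integrable s P) (hbi : Integrable b P)
    (hEb : 0 < ∫ ω, b ω ∂P)
    (W : ℝ)
    (hW : ∫ ω, b ω * (if b ω < W then (1:ℝ) else 0) ∂P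
        = ∫ ω, b ω * (if W ≤ b ω then (1:ℝ) else 0) ∂P) :
    ∫ ω, (s ω + (b ω - s ω) * (if s ω ≤ W ∧ W ≤ b ω then (1:ℝ) else 0)) ∂P
      ≥ (1/2) * ∫ ω, max (s ω) (b ω) ∂P := by
  classical
  -- measurability of real-valued indicator-style functions
  have m1 : Measurable (fun x : ℝ => if x ≤ W then (1:ℝ) else 0) :=
    Measurable.ite (measurableSet_le measurable_id measurable_const)
      measurable_const measurable_const
  have m2 : Measurable (fun x : ℝ => if W ≤ x then (1:ℝ) else 0) :=
    Measurable.ite (measurableSet_le measurable_const measurable_id)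
      measurable_const measurable_const
  have m3 : Measurable (fun x : ℝ => if x < W then (1:ℝ) else 0) :=
    Measurable.ite (measurableSet_lt measurable_id measurable_const)
      measurable_const measurable_const
  have m4 : Measurable (fun x : ℝ => if W < x then (1:ℝ) else 0) :=
    Measurable.ite (measurableSet_lt measurable_const measurable_id)
      measurable_const measurable_const
  have m5 : Measurable (fun x : ℝ => x * (if W ≤ x then (1:ℝ) else 0)) :=
    measurable_id.mul m2
  have m6 : Measurable (fun x : ℝ => x * (if x < W then (1:ℝ) else 0)) :=
    measurable_id.mul m3
  have m7 : Measurable (fun x : ℝ => max (x - W) 0) :=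
    (measurable_id.sub measurable_const).max measurable_const
  have m8 : Measurable (fun x : ℝ => x * (if x ≤ W then (1:ℝ) else 0)) :=
    measurable_id.mul m1
  -- key integrands
  set A1 : Ω → ℝ := fun ω => b ω * (if W ≤ b ω then (1:ℝ) else 0) with hA1def
  set A2 : Ω → ℝ := fun ω => b ω * (if b ω < W then (1:ℝ) else 0) with hA2def
  set A3 : Ω → ℝ := fun ω => s ω * (if s ω ≤ W then (1:ℝ) else 0) with hA3def
  set A4 : Ω → ℝ := fun ω => s ω * (if W < s ω then (1:ℝ) else 0) with hA4def
  set A5 : Ω → ℝ := fun ω =>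
    (if s ω ≤ W then (1:ℝ) else 0) * (b ω * (if W ≤ b ω then (1:ℝ) else 0)) with hA5def
  set A6 : Ω → ℝ := fun ω =>
    (s ω * (if s ω ≤ W then (1:ℝ) else 0)) * (if W ≤ b ω then (1:ℝ) else 0) with hA6def
  set A7 : Ω → ℝ := fun ω =>
    (if s ω ≤ W then (1:ℝ) else 0) * (b ω * (if b ω < W then (1:ℝ) else 0)) with hA7def
  set A8 : Ω → ℝ := fun ω =>
    (if W < s ω then (1:ℝ) else 0) * max (b ω - W) 0 with hA8def
  set A9 : Ω → ℝ := fun ω => max (b ω - W) 0 with hA9def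
  set A10 : Ω → ℝ := fun ω =>
    (b ω - s ω) * (if s ω ≤ W ∧ W ≤ b ω then (1:ℝ) else 0) with hA10def
  set A11 : Ω → ℝ := fun ω => max (b ω - s ω) 0 with hA11def
  -- measurability on Ω
  have trademeas : MeasurableSet {ω : Ω | s ω ≤ W ∧ W ≤ b ω} :=
    (measurableSet_le hsm measurable_const).inter (measurableSet_le measurable_const hbm)
  have mA10 : Measurable A10 :=
    (hbm.sub hsm).mul (Measurable.ite trademeas measurable_const measurable_const)
  -- integrability (part 1: no sign condition on W needed)
  have iA1 : Integrable A1 P := integrable_dom hbi ((m5.comp hbm).aestronglyMeasurable)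
    (fun ω => by by_cases h : W ≤ b ω <;> simp [hA1def, h, abs_nonneg])
  have iA2 : Integrable A2 P := integrable_dom hbi ((m6.comp hbm).aestronglyMeasurable)
    (fun ω => by by_cases h : b ω < W <;> simp [hA2def, h, abs_nonneg])
  have iA3 : Integrable A3 P := integrable_dom hsi ((m8.comp hsm).aestronglyMeasurable)
    (fun ω => by by_cases h : s ω ≤ W <;> simp [hA3def, h, abs_nonneg])
  have iA4 : Integrable A4 P :=
    integrable_dom hsi (((measurable_id.mul m4).comp hsm).aestronglyMeasurable)
    (fun ω => by by_cases h : W < s ω <;> simp [hA4def, h, abs_nonneg])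
  have iA5 : Integrable A5 P := integrable_dom hbi
    (((m1.comp hsm).mul (m5.comp hbm)).aestronglyMeasurable)
    (fun ω => by by_cases h1 : s ω ≤ W <;> by_cases h2 : W ≤ b ω <;>
      simp [hA5def, h1, h2, abs_nonneg])
  have iA6 : Integrable A6 P := integrable_dom hsi
    (((m8.comp hsm).mul (m2.comp hbm)).aestronglyMeasurable)
    (fun ω => by by_cases h1 : s ω ≤ W <;> by_cases h2 : W ≤ b ω <;>
      simp [hA6def, h1, h2, abs_nonneg])
  have iA7 : Integrable A7 P := integrable_dom hbi
    (((m1.comp hsm).mul (m6.comp hbm)).aestronglyMeasurable)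
    (fun ω => by by_cases h1 : s ω ≤ W <;> by_cases h2 : b ω < W <;>
      simp [hA7def, h1, h2, abs_nonneg])
  have iA10 : Integrable A10 P := integrable_dom (hbi.sub hsi) mA10.aestronglyMeasurable
    (fun ω => by
      by_cases h : s ω ≤ W ∧ W ≤ b ω <;> simp [hA10def, h, abs_nonneg])
  have iA11 : Integrable A11 P := integrable_dom (hbi.sub hsi)
    (((hbm.sub hsm).max measurable_const).aestronglyMeasurable)
    (fun ω => by
      rw [abs_of_nonneg (le_max_right _ _)]
      rcases le_total (b ω - s ω) 0 with h | h
      · simp [hA11def, max_eq_right h, abs_nonneg]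
      · simp [hA11def, max_eq_left h, le_abs_self])
  have iIndS : Integrable (fun ω => if s ω ≤ W then (1:ℝ) else 0) P :=
    integrable_dom (integrable_const (1:ℝ)) ((m1.comp hsm).aestronglyMeasurable)
      (fun ω => by by_cases h : s ω ≤ W <;> simp [h])
  have iIndS' : Integrable (fun ω => if W < s ω then (1:ℝ) else 0) P :=
    integrable_dom (integrable_const (1:ℝ)) ((m4.comp hsm).aestronglyMeasurable)
      (fun ω => by by_cases h : W < s ω <;> simp [h])
  have iIndB : Integrable (fun ω => if W ≤ b ω then (1:ℝ) else 0) P :=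
    integrable_dom (integrable_const (1:ℝ)) ((m2.comp hbm).aestronglyMeasurable)
      (fun ω => by by_cases h : W ≤ b ω <;> simp [h])
  -- splitting E[b]
  have hsplitB : (∫ ω, A2 ω ∂P) + (∫ ω, A1 ω ∂P) = ∫ ω, b ω ∂P := by
    rw [← integral_add iA2 iA1]
    refine integral_congr_ae (Filter.Eventually.of_forall fun ω => ?_)
    by_cases h : b ω < W
    · have h' : ¬ W ≤ b ω := not_le.2 h
      simp [hA1def, hA2def, h, h']
    · have h' : W ≤ b ω := not_lt.1 h
      simp [hA1def, hA2def, h, h']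
  have hB2 : ∫ ω, A1 ω ∂P = (∫ ω, b ω ∂P) / 2 := by
    have := hW; linarith
  have hWpos : 0 < W := by
    by_contra hc
    push_neg at hc
    have hz : ∫ ω, A2 ω ∂P = 0 := by
      have hzz : A2 = fun _ => (0:ℝ) := funext fun ω => by
        have h : ¬ b ω < W := not_lt.2 (le_trans hc (hb0 ω))
        simp [hA2def, h]
      rw [hzz]; simp
    rw [hW, hB2] at hz
    linarith
  -- integrability (part 2: uses 0 < W)
  have hA9b : ∀ ω, |A9 ω| ≤ |b ω| := by
    intro ω
    rw [abs_of_nonneg (le_max_right _ _), abs_of_nonneg (hb0 ω)]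
    exact max_le (by linarith) (hb0 ω)
  have iA9 : Integrable A9 P := integrable_dom hbi ((m7.comp hbm).aestronglyMeasurable) hA9b
  have iA8 : Integrable A8 P := integrable_dom hbi
    (((m4.comp hsm).mul (m7.comp hbm)).aestronglyMeasurable)
    (fun ω => by
      by_cases h1 : W < s ω
      · simpa [hA8def, h1] using hA9b ω
      · simp [hA8def, h1, abs_nonneg])
  -- probability-type quantities
  set q := ∫ ω, (if s ω ≤ W then (1:ℝ) else 0) ∂P with hqdef
  set r := ∫ ω, (if W ≤ b ω then (1:ℝ) else 0) ∂P with hrdef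
  have hq0 : 0 ≤ q := by
    rw [hqdef]
    exact integral_nonneg fun ω => by by_cases h : s ω ≤ W <;> simp [h]
  have hq1 : q ≤ 1 := by
    rw [hqdef]
    calc ∫ ω, (if s ω ≤ W then (1:ℝ) else 0) ∂P
        ≤ ∫ _, (1:ℝ) ∂P := integral_mono iIndS (integrable_const 1)
          (fun ω => by by_cases h : s ω ≤ W <;> simp [h])
      _ = 1 := by simp
  have hr0 : 0 ≤ r := by
    rw [hrdef]
    exact integral_nonneg fun ω => by by_cases h : W ≤ b ω <;> simp [h]
  have hr1 : r ≤ 1 := by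
    rw [hrdef]
    calc ∫ ω, (if W ≤ b ω then (1:ℝ) else 0) ∂P
        ≤ ∫ _, (1:ℝ) ∂P := integral_mono iIndB (integrable_const 1)
          (fun ω => by by_cases h : W ≤ b ω <;> simp [h])
      _ = 1 := by simp
  have hq' : ∫ ω, (if W < s ω then (1:ℝ) else 0) ∂P = 1 - q := by
    have h1 : (∫ ω, ((if s ω ≤ W then (1:ℝ) else 0) + (if W < s ω then (1:ℝ) else 0)) ∂P) = 1 := by
      have hzz : (fun ω => (if s ω ≤ W then (1:ℝ) else 0) + (if W < s ω then (1:ℝ) else 0))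
          = fun _ => (1:ℝ) := funext fun ω => by
        by_cases h : s ω ≤ W
        · simp [h, not_lt.2 h]
        · simp [h, not_le.1 h]
      rw [hzz]; simp
    rw [integral_add iIndS iIndS'] at h1
    rw [hqdef]; linarith
  -- independence identities
  have hiA5 : ∫ ω, A5 ω ∂P = q * ∫ ω, A1 ω ∂P := by
    have h := (hindep.comp m1 m5).integral_fun_mul_eq_mul_integral
      ((m1.comp hsm).aestronglyMeasurable) ((m5.comp hbm).aestronglyMeasurable)
    simpa [Function.comp, hA5def, hA1def, hqdef] using h
  have hiA6 : ∫ ω, A6 ω ∂P = (∫ ω, A3 ω ∂P) * r := by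
    have h := (hindep.comp m8 m2).integral_fun_mul_eq_mul_integral
      ((m8.comp hsm).aestronglyMeasurable) ((m2.comp hbm).aestronglyMeasurable)
    simpa [Function.comp, hA6def, hA3def, hrdef] using h
  have hiA7 : ∫ ω, A7 ω ∂P = q * ∫ ω, A2 ω ∂P := by
    have h := (hindep.comp m1 m6).integral_fun_mul_eq_mul_integral
      ((m1.comp hsm).aestronglyMeasurable) ((m6.comp hbm).aestronglyMeasurable)
    simpa [Function.comp, hA7def, hA2def, hqdef] using h
  have hiA8 : ∫ ω, A8 ω ∂P = (1 - q) * ∫ ω, A9 ω ∂P := by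
    have h := (hindep.comp m4 m7).integral_fun_mul_eq_mul_integral
      ((m4.comp hsm).aestronglyMeasurable) ((m7.comp hbm).aestronglyMeasurable)
    rw [← hq']
    simpa [Function.comp, hA8def, hA9def] using h
  -- trade gain identity
  have hG : ∫ ω, A10 ω ∂P = ∫ ω, A5 ω ∂P - ∫ ω, A6 ω ∂P := by
    rw [← integral_sub iA5 iA6]
    refine integral_congr_ae (Filter.Eventually.of_forall fun ω => ?_)
    by_cases h1 : s ω ≤ W <;> by_cases h2 : W ≤ b ω <;>
      simp [hA10def, hA5def, hA6def, h1, h2] <;> ring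
  -- key pointwise inequality
  have hkey : ∀ ω, A11 ω ≤ A10 ω + A7 ω + A8 ω := by
    intro ω
    show max (b ω - s ω) 0 ≤
      (b ω - s ω) * (if s ω ≤ W ∧ W ≤ b ω then (1:ℝ) else 0)
      + (if s ω ≤ W then (1:ℝ) else 0) * (b ω * (if b ω < W then (1:ℝ) else 0))
      + (if W < s ω then (1:ℝ) else 0) * max (b ω - W) 0
    by_cases h1 : s ω ≤ W
    · by_cases h2 : W ≤ b ω
      · rw [if_pos (⟨h1, h2⟩ : s ω ≤ W ∧ W ≤ b ω), if_pos h1, if_neg (not_lt.2 h2),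
          if_neg (not_lt.2 h1)]
        have e : (b ω - s ω) * 1 + 1 * (b ω * 0) + 0 * max (b ω - W) 0 = b ω - s ω := by ring
        rw [e]
        exact max_le le_rfl (by linarith)
      · rw [if_neg (fun h : s ω ≤ W ∧ W ≤ b ω => h2 h.2), if_pos h1, if_pos (not_le.1 h2),
          if_neg (not_lt.2 h1)]
        have e : (b ω - s ω) * 0 + 1 * (b ω * 1) + 0 * max (b ω - W) 0 = b ω := by ring
        rw [e]
        exact max_le (by linarith [hs0 ω]) (hb0 ω)
    · have h5 : W < s ω := not_le.1 h1
      rw [if_neg (fun h : s ω ≤ W ∧ W ≤ b ω => h1 h.1), if_neg h1, if_pos h5]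
      have e : (b ω - s ω) * 0 + 0 * (b ω * (if b ω < W then (1:ℝ) else 0))
          + 1 * max (b ω - W) 0 = max (b ω - W) 0 := by ring
      rw [e]
      exact max_le (le_trans (by linarith) (le_max_left _ _)) (le_max_right _ _)
  have isum1 : Integrable (fun ω => A10 ω + A7 ω) P := iA10.add iA7
  have isum2 : Integrable (fun ω => A10 ω + A7 ω + A8 ω) P := isum1.add iA8
  have e1 : ∫ ω, (A10 ω + A7 ω + A8 ω) ∂P
      = (∫ ω, (A10 ω + A7 ω) ∂P) + ∫ ω, A8 ω ∂P := integral_add isum1 iA8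
  have e2 : ∫ ω, (A10 ω + A7 ω) ∂P = (∫ ω, A10 ω ∂P) + ∫ ω, A7 ω ∂P :=
    integral_add iA10 iA7
  have hEP : ∫ ω, A11 ω ∂P ≤ (∫ ω, A10 ω ∂P) + (∫ ω, A7 ω ∂P) + ∫ ω, A8 ω ∂P := by
    calc ∫ ω, A11 ω ∂P ≤ ∫ ω, (A10 ω + A7 ω + A8 ω) ∂P :=
          integral_mono iA11 isum2 hkey
      _ = (∫ ω, A10 ω ∂P) + (∫ ω, A7 ω ∂P) + ∫ ω, A8 ω ∂P := by rw [e1, e2]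
  -- splitting E[s]
  have hsplitS : (∫ ω, A3 ω ∂P) + (∫ ω, A4 ω ∂P) = ∫ ω, s ω ∂P := by
    rw [← integral_add iA3 iA4]
    refine integral_congr_ae (Filter.Eventually.of_forall fun ω => ?_)
    by_cases h : s ω ≤ W
    · simp [hA3def, hA4def, h, not_lt.2 h]
    · simp [hA3def, hA4def, h, not_le.1 h]
  have hA4low : W * (1 - q) ≤ ∫ ω, A4 ω ∂P := by
    rw [← hq', ← integral_const_mul]
    refine integral_mono (iIndS'.const_mul W) iA4 fun ω => ?_
    by_cases h : W < s ω
    · simp only [hA4def, h, if_pos, mul_one]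
      linarith
    · simp [hA4def, h]
  have hA30 : 0 ≤ ∫ ω, A3 ω ∂P :=
    integral_nonneg fun ω => by
      by_cases h : s ω ≤ W <;> simp [hA3def, h, hs0 ω]
  have hA90 : 0 ≤ ∫ ω, A9 ω ∂P := integral_nonneg fun ω => le_max_right _ _
  have hA2W : ∫ ω, A2 ω ∂P ≤ W := by
    calc ∫ ω, A2 ω ∂P ≤ ∫ _, W ∂P := by
          refine integral_mono iA2 (integrable_const W) fun ω => ?_
          by_cases h : b ω < W
          · simp only [hA2def, h, if_pos, mul_one]; linarith
          · simp [hA2def, h, le_of_lt hWpos]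
      _ = W := by simp
  have hA9W : ∫ ω, A9 ω ∂P ≤ W := by
    have h1 : ∫ ω, A9 ω ∂P ≤ ∫ ω, A1 ω ∂P := by
      refine integral_mono iA9 iA1 fun ω => ?_
      by_cases h : W ≤ b ω
      · simp only [hA9def, hA1def, h, if_pos, mul_one]
        exact max_le (by linarith [hb0 ω]) (hb0 ω)
      · simp only [hA9def, hA1def, h, if_neg, mul_zero, if_false]
        exact max_le (by linarith [not_le.1 h]) le_rfl
    rw [← hW] at h1
    linarith [hA2W]
  -- rewrite the goal
  have hgoalL : ∫ ω, (s ω + (b ω - s ω) * (if s ω ≤ W ∧ W ≤ b ω then (1:ℝ) else 0)) ∂P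
      = (∫ ω, s ω ∂P) + ∫ ω, A10 ω ∂P := integral_add hsi iA10
  have hgoalR : ∫ ω, max (s ω) (b ω) ∂P = (∫ ω, s ω ∂P) + ∫ ω, A11 ω ∂P := by
    rw [← integral_add hsi iA11]
    refine integral_congr_ae (Filter.Eventually.of_forall fun ω => ?_)
    simp only [hA11def]
    rcases le_total (s ω) (b ω) with h | h
    · rw [max_eq_right h, max_eq_left (sub_nonneg.2 h)]; ring
    · rw [max_eq_left h, max_eq_right (sub_nonpos.2 h)]; ring
  rw [hgoalL, hgoalR]
  -- final arithmetic
  have hp1 : 0 ≤ (∫ ω, A3 ω ∂P) * (1 - r) := mul_nonneg hA30 (by linarith)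
  have hp2 : 0 ≤ (W - ∫ ω, A9 ω ∂P) * (1 - q) := mul_nonneg (by linarith) (by linarith)
  have hqx : q * ∫ ω, A2 ω ∂P = q * ∫ ω, A1 ω ∂P := by rw [hW]
  linarith [hqx, hEP, hG, hiA5, hiA6, hiA7, hiA8, hW, hsplitS, hA4low, hp1, hp2]
end

section
/- Let b be a nonnegative integrable real-valued random variable whose distribution is atomless and satisfies E[b] > 0. Then there exists W ∈ ℝ such that E[b·𝟙{b < W}] = E[b·𝟙{b ≥ W}] = E[b]/2; moreover any such W satisfies P(b > W) ≤ 1/2 and W ≥ E[b]/2. -/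
open MeasureTheory ProbabilityTheory Filter

/-- **Existence and properties of a weighted median.**
If `b` is a nonnegative integrable random variable whose distribution is
atomless and `E[b] > 0`, then there exists `W` with
`E[b·𝟙{b < W}] = E[b·𝟙{b ≥ W}] = E[b]/2`; moreover any such `W` satisfies
`P(b > W) ≤ 1/2` and `W ≥ E[b]/2`. -/
theorem weighted_median_exists_and_properties
    {Ω : Type*} [MeasurableSpace Ω] {P : Measure Ω} [IsProbabilityMeasure P]
    (b : Ω → ℝ) (hbm : Measurable b)
    (hb0 : ∀ ω, 0 ≤ b ω) (hbi : Integrable b P)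
    (hatomless : ∀ x : ℝ, P {ω | b ω = x} = 0)
    (hEb : 0 < ∫ ω, b ω ∂P) :
    (∃ W : ℝ,
        ∫ ω, b ω * (if b ω < W then (1:ℝ) else 0) ∂P = (∫ ω, b ω ∂P) / 2 ∧
        ∫ ω, b ω * (if W ≤ b ω then (1:ℝ) else 0) ∂P = (∫ ω, b ω ∂P) / 2) ∧
    (∀ W : ℝ,
        (∫ ω, b ω * (if b ω < W then (1:ℝ) else 0) ∂P = (∫ ω, b ω ∂P) / 2 ∧
         ∫ ω, b ω * (if W ≤ b ω then (1:ℝ) else 0) ∂P = (∫ ω, b ω ∂P) / 2) →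
        P {ω | W < b ω} ≤ 1/2 ∧ (∫ ω, b ω ∂P) / 2 ≤ W) := by
  have hmeas : ∀ W : ℝ, Measurable (fun ω => b ω * (if b ω < W then (1:ℝ) else 0)) := by
    intro W
    exact hbm.mul (Measurable.ite (measurableSet_lt hbm measurable_const)
      measurable_const measurable_const)
  have hbound : ∀ W : ℝ, ∀ ω, ‖b ω * (if b ω < W then (1:ℝ) else 0)‖ ≤ b ω := by
    intro W ω
    rw [norm_mul, Real.norm_eq_abs, abs_of_nonneg (hb0 ω)]
    split <;> simp [hb0 ω]
  have hint : ∀ W : ℝ, Integrable (fun ω => b ω * (if b ω < W then (1:ℝ) else 0)) P := by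
    intro W
    refine hbi.mono (hmeas W).aestronglyMeasurable (Eventually.of_forall fun ω => ?_)
    rw [Real.norm_eq_abs (b ω), abs_of_nonneg (hb0 ω)]
    exact hbound W ω
  set g : ℝ → ℝ := fun W => ∫ ω, b ω * (if b ω < W then (1:ℝ) else 0) ∂P with hg
  -- continuity of g
  have hcont : Continuous g := by
    rw [continuous_iff_continuousAt]
    intro W₀
    have := tendsto_integral_filter_of_dominated_convergence (μ := P)
      (F := fun W ω => b ω * (if b ω < W then (1:ℝ) else 0))
      (f := fun ω => b ω * (if b ω < W₀ then (1:ℝ) else 0))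
      (l := nhds W₀) (bound := b)
      (Eventually.of_forall fun W => (hmeas W).aestronglyMeasurable)
      (Eventually.of_forall fun W => Eventually.of_forall fun ω => hbound W ω)
      hbi ?_
    · exact this
    · have hnull : ∀ᵐ ω ∂P, b ω ≠ W₀ := by
        have := hatomless W₀
        rw [ae_iff]
        simpa using this
      filter_upwards [hnull] with ω hω
      rcases lt_or_gt_of_ne hω with h | h
      · have hev : ∀ᶠ W in nhds W₀, b ω * (if b ω < W then (1:ℝ) else 0) = b ω * 1 := by
          filter_upwards [eventually_gt_nhds h] with W hW
          rw [if_pos hW]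
        rw [show b ω * (if b ω < W₀ then (1:ℝ) else 0) = b ω * 1 from by rw [if_pos h]]
        exact Tendsto.congr' (hev.mono fun _ h => h.symm) tendsto_const_nhds
      · have hev : ∀ᶠ W in nhds W₀, b ω * (if b ω < W then (1:ℝ) else 0) = b ω * 0 := by
          filter_upwards [eventually_lt_nhds h] with W hW
          rw [if_neg (not_lt.mpr hW.le)]
        rw [show b ω * (if b ω < W₀ then (1:ℝ) else 0) = b ω * 0 from by
          rw [if_neg (not_lt.mpr h.le)]]
        exact Tendsto.congr' (hev.mono fun _ h => h.symm) tendsto_const_nhds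
  have hg0 : g 0 = 0 := by
    rw [hg]
    simp only
    have : ∀ ω, b ω * (if b ω < (0:ℝ) then (1:ℝ) else 0) = 0 := fun ω => by
      rw [if_neg (not_lt.mpr (hb0 ω)), mul_zero]
    simp [this]
  have htop : Tendsto g atTop (nhds (∫ ω, b ω ∂P)) := by
    refine tendsto_integral_filter_of_dominated_convergence (μ := P) (bound := b)
      (Eventually.of_forall fun W => (hmeas W).aestronglyMeasurable)
      (Eventually.of_forall fun W => Eventually.of_forall fun ω => hbound W ω)
      hbi ?_
    refine Eventually.of_forall fun ω => ?_
    have hev : ∀ᶠ W in atTop, b ω * (if b ω < W then (1:ℝ) else 0) = b ω := by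
      filter_upwards [eventually_gt_atTop (b ω)] with W hW
      rw [if_pos hW, mul_one]
    exact Tendsto.congr' (hev.mono fun _ h => h.symm) tendsto_const_nhds
  -- the complementary identity
  have hcompl : ∀ W : ℝ, ∫ ω, b ω * (if W ≤ b ω then (1:ℝ) else 0) ∂P
      = (∫ ω, b ω ∂P) - g W := by
    intro W
    have heq : (fun ω => b ω * (if W ≤ b ω then (1:ℝ) else 0))
        = fun ω => b ω - b ω * (if b ω < W then (1:ℝ) else 0) := by
      funext ω
      by_cases h : b ω < W
      · rw [if_pos h, if_neg (not_le.mpr h)]; ring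
      · rw [if_neg h, if_pos (not_lt.mp h)]; ring
    rw [heq, integral_sub hbi (hint W)]
  -- existence
  obtain ⟨M, hM0, hMg⟩ : ∃ M : ℝ, 0 ≤ M ∧ (∫ ω, b ω ∂P) / 2 ≤ g M := by
    have h1 : ∀ᶠ W in atTop, (∫ ω, b ω ∂P) / 2 ≤ g W :=
      htop.eventually (eventually_ge_nhds (by linarith))
    obtain ⟨M, hM⟩ := (h1.and (eventually_ge_atTop (0:ℝ))).exists
    exact ⟨M, hM.2, hM.1⟩
  have hIVT : (∫ ω, b ω ∂P) / 2 ∈ g '' Set.Icc 0 M := by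
    apply intermediate_value_Icc hM0 hcont.continuousOn
    rw [hg0]
    constructor <;> linarith
  obtain ⟨W₀, _, hW₀⟩ := hIVT
  refine ⟨⟨W₀, hW₀, by rw [hcompl, hW₀]; ring⟩, ?_⟩
  -- properties
  intro W ⟨h1, h2⟩
  have hWpos : 0 < W := by
    by_contra h
    push_neg at h
    have hzero : ∫ ω, b ω * (if b ω < W then (1:ℝ) else 0) ∂P = 0 := by
      have heq0 : ∀ ω, b ω * (if b ω < W then (1:ℝ) else 0) = 0 := fun ω => by
        rw [if_neg (not_lt.mpr (h.trans (hb0 ω))), mul_zero]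
      simp [heq0]
    rw [hzero] at h1
    linarith
  have hWge : (∫ ω, b ω ∂P) / 2 ≤ W := by
    have hle : ∀ ω, b ω * (if b ω < W then (1:ℝ) else 0) ≤ W := by
      intro ω
      by_cases h : b ω < W
      · rw [if_pos h, mul_one]; exact h.le
      · rw [if_neg h, mul_zero]; exact hWpos.le
    calc (∫ ω, b ω ∂P) / 2 = ∫ ω, b ω * (if b ω < W then (1:ℝ) else 0) ∂P := h1.symm
      _ ≤ ∫ _ω, W ∂P := integral_mono (hint W) (integrable_const W) hle
      _ = W := by simp
  refine ⟨?_, hWge⟩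
  -- P(b > W) ≤ 1/2
  have hsge : MeasurableSet {ω | W ≤ b ω} := measurableSet_le measurable_const hbm
  have hslt : MeasurableSet {ω | b ω < W} := measurableSet_lt hbm measurable_const
  set p : ℝ := (P {ω | W ≤ b ω}).toReal with hp
  set q : ℝ := (P {ω | b ω < W}).toReal with hq
  have hind1 : ∫ ω, Set.indicator {ω | W ≤ b ω} (fun _ => W) ω ∂P = p * W := by
    rw [integral_indicator_const _ hsge]; simp [hp, mul_comm, Measure.real]
  have hind2 : ∫ ω, Set.indicator {ω | b ω < W} (fun _ => W) ω ∂P = q * W := by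
    rw [integral_indicator_const _ hslt]; simp [hq, mul_comm, Measure.real]
  have hintind1 : Integrable (Set.indicator {ω | W ≤ b ω} (fun _ => W)) P :=
    (integrable_const W).indicator hsge
  have hintind2 : Integrable (Set.indicator {ω | b ω < W} (fun _ => W)) P :=
    (integrable_const W).indicator hslt
  have hint2 : Integrable (fun ω => b ω * (if W ≤ b ω then (1:ℝ) else 0)) P := by
    have heq : (fun ω => b ω * (if W ≤ b ω then (1:ℝ) else 0))
        = fun ω => b ω - b ω * (if b ω < W then (1:ℝ) else 0) := by
      funext ω
      by_cases h : b ω < W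
      · rw [if_pos h, if_neg (not_le.mpr h)]; ring
      · rw [if_neg h, if_pos (not_lt.mp h)]; ring
    rw [heq]; exact hbi.sub (hint W)
  have hle1 : p * W ≤ (∫ ω, b ω ∂P) / 2 := by
    rw [← hind1, ← h2]
    refine integral_mono hintind1 hint2 fun ω => ?_
    by_cases h : W ≤ b ω
    · simp only [Set.indicator_apply, Set.mem_setOf_eq, if_pos h, mul_one]; exact h
    · simp only [Set.indicator_apply, Set.mem_setOf_eq, if_neg h, mul_zero]; exact le_refl 0
  have hle2 : (∫ ω, b ω ∂P) / 2 ≤ q * W := by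
    rw [← hind2, ← h1]
    refine integral_mono (hint W) hintind2 fun ω => ?_
    by_cases h : b ω < W
    · simp only [Set.indicator_apply, Set.mem_setOf_eq, if_pos h, mul_one]; exact h.le
    · simp only [Set.indicator_apply, Set.mem_setOf_eq, if_neg h, mul_zero]; exact le_refl 0
  have hpq : p ≤ q := le_of_mul_le_mul_right (hle1.trans hle2) hWpos
  have hsum : p + q = 1 := by
    have hcompl' : {ω | b ω < W} = {ω | W ≤ b ω}ᶜ := by
      ext ω; simp [not_le]
    rw [hp, hq, hcompl', ← ENNReal.toReal_add (measure_ne_top P _) (measure_ne_top P _),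
      measure_add_measure_compl hsge]
    simp
  have hp12 : p ≤ 1/2 := by linarith
  have hge : P {ω | W < b ω} ≤ P {ω | W ≤ b ω} :=
    measure_mono (Set.setOf_subset_setOf.mpr fun ω h => h.le)
  refine hge.trans ?_
  rw [← ENNReal.ofReal_toReal (measure_ne_top P {ω | W ≤ b ω})]
  calc ENNReal.ofReal p ≤ ENNReal.ofReal (1/2) := ENNReal.ofReal_le_ofReal hp12
    _ = 1/2 := by rw [ENNReal.ofReal_div_of_pos (by norm_num)]; simp
end

section
/- Let s and b be independent nonnegative integrable real-valued random variables, and let q : [1/e, 1] → ℝ be a measurable function satisfying P(s ≤ q(x)) = x and P(s < q(x)) = x for every x ∈ [1/e, 1] (a quantile function of the seller's distribution). Let X be a random variable on [1/e, 1] with probability density g(x) = 1/x, independent of (s, b). Then posting the random price q(X) yields expected welfare E[s + (b − s)·𝟙{s ≤ q(X) ∧ q(X) ≤ b}] ≥ (1 − 1/e)·E[max(s, b)]. -/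
open MeasureTheory ProbabilityTheory Set
open scoped ENNReal


lemma layer_aux {Ω : Type*} [MeasurableSpace Ω] (P : Measure Ω) [SFinite P]
    {f g : Ω → ℝ} (hf : Measurable f) (hg : Measurable g) (hf0 : ∀ ω, 0 ≤ f ω)
    {G : Set Ω} (hG : MeasurableSet G) :
    ∫⁻ ω, G.indicator (fun ω => ENNReal.ofReal (g ω - f ω)) ω ∂P
      = ∫⁻ t in Set.Ioi (0:ℝ), P (G ∩ {ω | f ω ≤ t ∧ t < g ω}) := by
  have hHmeas : MeasurableSet {p : Ω × ℝ | p.1 ∈ G ∧ f p.1 ≤ p.2 ∧ p.2 < g p.1} := by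
    refine (hG.preimage measurable_fst).inter (MeasurableSet.inter ?_ ?_)
    · exact measurableSet_le (hf.comp measurable_fst) measurable_snd
    · exact measurableSet_lt measurable_snd (hg.comp measurable_fst)
  have key : ∀ ω, G.indicator (fun ω => ENNReal.ofReal (g ω - f ω)) ω
      = ∫⁻ t in Set.Ioi (0:ℝ),
          ({p : Ω × ℝ | p.1 ∈ G ∧ f p.1 ≤ p.2 ∧ p.2 < g p.1}.indicator (1 : Ω × ℝ → ℝ≥0∞) (ω, t)) := by
    intro ω
    by_cases hωG : ω ∈ G
    · rw [Set.indicator_of_mem hωG]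
      have h1 : ∀ t : ℝ, ({p : Ω × ℝ | p.1 ∈ G ∧ f p.1 ≤ p.2 ∧ p.2 < g p.1}.indicator (1 : Ω × ℝ → ℝ≥0∞) (ω, t))
          = (Set.Ico (f ω) (g ω)).indicator 1 t := by
        intro t
        by_cases h : f ω ≤ t ∧ t < g ω
        · rw [Set.indicator_of_mem (show (ω, t) ∈ {p : Ω × ℝ | p.1 ∈ G ∧ f p.1 ≤ p.2 ∧ p.2 < g p.1} from ⟨hωG, h⟩),
            Set.indicator_of_mem (Set.mem_Ico.mpr h)]
          rfl
        · rw [Set.indicator_of_notMem (fun hc => h ⟨hc.2.1, hc.2.2⟩),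
            Set.indicator_of_notMem (fun hc => h (Set.mem_Ico.mp hc))]
      simp only [h1]
      rw [lintegral_indicator_one measurableSet_Ico]
      rw [Measure.restrict_apply measurableSet_Ico]
      refine le_antisymm ?_ ?_
      · calc ENNReal.ofReal (g ω - f ω) = volume (Set.Ioo (f ω) (g ω)) := (Real.volume_Ioo).symm
          _ ≤ volume (Set.Ico (f ω) (g ω) ∩ Set.Ioi 0) := by
              refine measure_mono fun x hx => ⟨⟨le_of_lt hx.1, hx.2⟩, lt_of_le_of_lt (hf0 ω) hx.1⟩
      · calc volume (Set.Ico (f ω) (g ω) ∩ Set.Ioi 0) ≤ volume (Set.Ico (f ω) (g ω)) :=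
              measure_mono Set.inter_subset_left
          _ = ENNReal.ofReal (g ω - f ω) := Real.volume_Ico
    · rw [Set.indicator_of_notMem hωG]
      have h1 : ∀ t : ℝ, ({p : Ω × ℝ | p.1 ∈ G ∧ f p.1 ≤ p.2 ∧ p.2 < g p.1}.indicator
          (1 : Ω × ℝ → ℝ≥0∞) (ω, t)) = 0 := by
        intro t
        exact Set.indicator_of_notMem (fun hc => hωG hc.1) _
      simp only [h1, lintegral_zero]
  calc ∫⁻ ω, G.indicator (fun ω => ENNReal.ofReal (g ω - f ω)) ω ∂P
      = ∫⁻ ω, (∫⁻ t in Set.Ioi (0:ℝ),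
          ({p : Ω × ℝ | p.1 ∈ G ∧ f p.1 ≤ p.2 ∧ p.2 < g p.1}.indicator (1 : Ω × ℝ → ℝ≥0∞) (ω, t))) ∂P :=
        lintegral_congr key
    _ = ∫⁻ t in Set.Ioi (0:ℝ), ∫⁻ ω,
          ({p : Ω × ℝ | p.1 ∈ G ∧ f p.1 ≤ p.2 ∧ p.2 < g p.1}.indicator (1 : Ω × ℝ → ℝ≥0∞) (ω, t)) ∂P := by
        refine lintegral_lintegral_swap ?_
        exact (measurable_one.indicator hHmeas).aemeasurable
    _ = ∫⁻ t in Set.Ioi (0:ℝ), P (G ∩ {ω | f ω ≤ t ∧ t < g ω}) := by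
        refine lintegral_congr fun t => ?_
        have h2 : ∀ ω : Ω, ({p : Ω × ℝ | p.1 ∈ G ∧ f p.1 ≤ p.2 ∧ p.2 < g p.1}.indicator
            (1 : Ω × ℝ → ℝ≥0∞) (ω, t)) = (G ∩ {ω | f ω ≤ t ∧ t < g ω}).indicator 1 ω := by
          intro ω
          by_cases h : ω ∈ G ∩ {ω | f ω ≤ t ∧ t < g ω}
          · rw [Set.indicator_of_mem (show (ω, t) ∈ {p : Ω × ℝ | p.1 ∈ G ∧ f p.1 ≤ p.2 ∧ p.2 < g p.1} from ⟨h.1, h.2.1, h.2.2⟩),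
              Set.indicator_of_mem h]
            rfl
          · rw [Set.indicator_of_notMem (fun hc => h ⟨hc.1, hc.2.1, hc.2.2⟩),
              Set.indicator_of_notMem h]
        simp only [h2]
        exact lintegral_indicator_one (hG.inter ((measurableSet_le hf measurable_const).inter
          (measurableSet_lt measurable_const hg)))


/-- **The Random-Quantile mechanism is a (1 - 1/e)-approximation.**
Let `s, b` be independent nonnegative integrable random variables, let `q` be
a quantile function of the seller's distribution on `[1/e, 1]` (so
`P(s ≤ q x) = P(s < q x) = x` there), and let `X` be a random variable with
density `1/x` on `[1/e, 1]`, independent of `(s, b)`. Then posting the random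
price `q(X)` yields expected welfare at least `(1 - 1/e)·E[max(s,b)]`. -/
theorem random_quantile_mechanism
    {Ω : Type*} [MeasurableSpace Ω] {P : Measure Ω} [IsProbabilityMeasure P]
    (s b X : Ω → ℝ)
    (hsm : Measurable s) (hbm : Measurable b) (hXm : Measurable X)
    (hsb_indep : IndepFun s b P)
    (hX_indep : IndepFun (fun ω => (s ω, b ω)) X P)
    (hs0 : ∀ ω, 0 ≤ s ω) (hb0 : ∀ ω, 0 ≤ b ω)
    (hsi : Integrable s P) (hbi : Integrable b P)
    (q : ℝ → ℝ) (hqm : Measurable q)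
    (hq1 : ∀ x ∈ Set.Icc (Real.exp 1)⁻¹ 1, P {ω | s ω ≤ q x} = ENNReal.ofReal x)
    (hq2 : ∀ x ∈ Set.Icc (Real.exp 1)⁻¹ 1, P {ω | s ω < q x} = ENNReal.ofReal x)
    (hX_law : P.map X
        = (volume.restrict (Set.Icc (Real.exp 1)⁻¹ 1)).withDensity
            (fun x => ENNReal.ofReal x⁻¹)) :
    ∫ ω, (s ω + (b ω - s ω) * (if s ω ≤ q (X ω) ∧ q (X ω) ≤ b ω then (1:ℝ) else 0)) ∂P
      ≥ (1 - (Real.exp 1)⁻¹) * ∫ ω, max (s ω) (b ω) ∂P := by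
  classical
  have hι_pos : 0 < (Real.exp 1)⁻¹ := inv_pos.mpr (Real.exp_pos 1)
  have hι_lt_one : (Real.exp 1)⁻¹ < 1 := by
    have h := Real.exp_one_gt_d9
    rw [inv_lt_one_iff₀]
    right; linarith
  set ι : ℝ := (Real.exp 1)⁻¹ with hι_def
  set F : ℝ → ℝ≥0∞ := fun t => P {ω | s ω ≤ t} with hF_def
  set β : ℝ → ℝ≥0∞ := fun t => P {ω | t < b ω} with hβ_def
  set T : Ω → ℝ := fun ω => (b ω - s ω) * (if s ω ≤ q (X ω) ∧ q (X ω) ≤ b ω then (1:ℝ) else 0)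
    with hT_def
  set Trade : Set Ω := {ω | s ω ≤ q (X ω) ∧ q (X ω) ≤ b ω} with hTrade_def
  have hqX : Measurable fun ω => q (X ω) := hqm.comp hXm
  have hTrade_meas : MeasurableSet Trade :=
    (measurableSet_le hsm hqX).inter (measurableSet_le hqX hbm)
  have hF_mono : Monotone F := fun t₁ t₂ h => measure_mono fun ω hω => le_trans hω h
  have hF_meas : Measurable F := hF_mono.measurable
  have hβ_anti : Antitone β := fun t₁ t₂ h => measure_mono fun ω hω => lt_of_le_of_lt h hω
  have hβ_meas : Measurable β := hβ_anti.measurable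
  have hF_le_one : ∀ t, F t ≤ 1 := fun t => prob_le_one
  have hβ_le_one : ∀ t, β t ≤ 1 := fun t => prob_le_one
  -- price comparison lemmas
  have hq_le : ∀ x ∈ Set.Icc ι 1, ∀ y : ℝ, ENNReal.ofReal x < F y → q x ≤ y := by
    intro x hx y hlt
    by_contra h
    push_neg at h
    have h2 : F y ≤ P {ω | s ω < q x} := measure_mono fun ω hω => lt_of_le_of_lt hω h
    rw [hq2 x hx] at h2
    exact absurd (lt_of_lt_of_le hlt h2) (lt_irrefl _)
  have hFmin : ∀ x ∈ Set.Icc ι 1, ∀ t : ℝ,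
      P {ω | s ω ≤ min t (q x)} = min (F t) (ENNReal.ofReal x) := by
    intro x hx t
    rcases le_total t (q x) with h | h
    · rw [min_eq_left h]
      have h2 : F t ≤ ENNReal.ofReal x := by
        rw [← hq1 x hx]
        exact measure_mono fun ω hω => le_trans hω h
      rw [min_eq_left h2]
    · rw [min_eq_right h]
      have h2 : ENNReal.ofReal x ≤ F t := by
        rw [← hq1 x hx]
        exact measure_mono fun ω hω => le_trans hω h
      rw [min_eq_right h2]
      exact hq1 x hx
  -- independence consequences
  have hsb_map : P.map (fun ω => (s ω, b ω)) = (P.map s).prod (P.map b) :=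
    (indepFun_iff_map_prod_eq_prod_map_map hsm.aemeasurable hbm.aemeasurable).mp hsb_indep
  have hX_map : P.map (fun ω => ((s ω, b ω), X ω))
      = ((P.map s).prod (P.map b)).prod (P.map X) := by
    rw [← hsb_map]
    exact (indepFun_iff_map_prod_eq_prod_map_map
      ((hsm.prodMk hbm)).aemeasurable hXm.aemeasurable).mp hX_indep
  -- the sets U t and kernel K t
  set U : ℝ → Set ℝ := fun t => {x : ℝ | ENNReal.ofReal x < F t} ∩ Set.Icc ι 1 with hU_def
  have hU_meas : ∀ t, MeasurableSet (U t) := fun t =>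
    (ENNReal.measurable_ofReal measurableSet_Iio).inter measurableSet_Icc
  set K : ℝ → ℝ≥0∞ := fun t => ∫⁻ x in U t, min (F t) (ENNReal.ofReal x) ∂(P.map X)
    with hK_def
  -- core bound
  have hcore : ∀ t : ℝ, K t * β t ≤ P (Trade ∩ {ω | s ω ≤ t ∧ t < b ω}) := by
    intro t
    have hPMs : IsProbabilityMeasure (P.map s) := Measure.isProbabilityMeasure_map hsm.aemeasurable
    have hPMb : IsProbabilityMeasure (P.map b) := Measure.isProbabilityMeasure_map hbm.aemeasurable
    have hPMX : IsProbabilityMeasure (P.map X) := Measure.isProbabilityMeasure_map hXm.aemeasurable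
    have hC_meas : MeasurableSet
        {p : (ℝ × ℝ) × ℝ | p.1.1 ≤ min t (q p.2) ∧ p.2 ∈ U t ∧ t < p.1.2} := by
      refine MeasurableSet.inter ?_ (MeasurableSet.inter ?_ ?_)
      · exact measurableSet_le (measurable_fst.comp measurable_fst)
          ((measurable_const.min hqm).comp measurable_snd)
      · exact (hU_meas t).preimage measurable_snd
      · exact measurableSet_lt measurable_const (measurable_snd.comp measurable_fst)
    have hBsub : (fun ω => ((s ω, b ω), X ω)) ⁻¹'
          {p : (ℝ × ℝ) × ℝ | p.1.1 ≤ min t (q p.2) ∧ p.2 ∈ U t ∧ t < p.1.2}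
        ⊆ Trade ∩ {ω | s ω ≤ t ∧ t < b ω} := by
      intro ω hω
      obtain ⟨h1, h2, h3⟩ := hω
      have hsx : s ω ≤ q (X ω) := le_trans h1 (min_le_right _ _)
      have hst : s ω ≤ t := le_trans h1 (min_le_left _ _)
      have hqb : q (X ω) ≤ b ω := hq_le _ h2.2 _ (lt_of_lt_of_le h2.1 (hF_mono h3.le))
      exact ⟨⟨hsx, hqb⟩, hst, h3⟩
    have hPB : P ((fun ω => ((s ω, b ω), X ω)) ⁻¹'
          {p : (ℝ × ℝ) × ℝ | p.1.1 ≤ min t (q p.2) ∧ p.2 ∈ U t ∧ t < p.1.2}) = K t * β t := by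
      rw [← Measure.map_apply ((hsm.prodMk hbm).prodMk hXm) hC_meas, hX_map,
        Measure.prod_apply_symm hC_meas]
      have hsec : ∀ x : ℝ, ((P.map s).prod (P.map b)) ((fun p : ℝ × ℝ => (p, x)) ⁻¹'
            {p : (ℝ × ℝ) × ℝ | p.1.1 ≤ min t (q p.2) ∧ p.2 ∈ U t ∧ t < p.1.2})
          = (U t).indicator (fun x => min (F t) (ENNReal.ofReal x) * β t) x := by
        intro x
        by_cases hx : x ∈ U t
        · have hs1 : ((fun p : ℝ × ℝ => (p, x)) ⁻¹'
              {p : (ℝ × ℝ) × ℝ | p.1.1 ≤ min t (q p.2) ∧ p.2 ∈ U t ∧ t < p.1.2})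
              = Set.Iic (min t (q x)) ×ˢ Set.Ioi t := by
            ext p
            simp only [Set.mem_preimage, Set.mem_setOf_eq, Set.mem_prod, Set.mem_Iic, Set.mem_Ioi]
            exact ⟨fun h => ⟨h.1, h.2.2⟩, fun h => ⟨h.1, hx, h.2⟩⟩
          rw [hs1, Measure.prod_prod, Set.indicator_of_mem hx,
            Measure.map_apply hsm measurableSet_Iic, Measure.map_apply hbm measurableSet_Ioi]
          congr 1
          exact hFmin x hx.2 t
        · have hs1 : ((fun p : ℝ × ℝ => (p, x)) ⁻¹'
              {p : (ℝ × ℝ) × ℝ | p.1.1 ≤ min t (q p.2) ∧ p.2 ∈ U t ∧ t < p.1.2}) = ∅ :=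
            Set.eq_empty_iff_forall_notMem.mpr fun p hp => hx hp.2.1
          rw [hs1, measure_empty, Set.indicator_of_notMem hx]
      rw [lintegral_congr hsec, lintegral_indicator (hU_meas t)]
      exact lintegral_mul_const _ (measurable_const.min ENNReal.measurable_ofReal)
    rw [← hPB]
    exact measure_mono hBsub
  -- scalar lemma
  have hscalar : ∀ t : ℝ, ENNReal.ofReal (1 - ι) * F t ≤ ENNReal.ofReal ι * (1 - F t) + K t := by
    intro t
    have hPMX : IsProbabilityMeasure (P.map X) := Measure.isProbabilityMeasure_map hXm.aemeasurable
    have hu1 : F t ≤ 1 := hF_le_one t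
    have hu_ne : F t ≠ ⊤ := (lt_of_le_of_lt hu1 ENNReal.one_lt_top).ne
    set u : ℝ := (F t).toReal with hu_def
    have hu0r : 0 ≤ u := ENNReal.toReal_nonneg
    have hu1r : u ≤ 1 := by simpa using ENNReal.toReal_mono ENNReal.one_ne_top hu1
    have hu_eq : ENNReal.ofReal u = F t := ENNReal.ofReal_toReal hu_ne
    have h1u : (1 : ℝ≥0∞) - F t = ENNReal.ofReal (1 - u) := by
      rw [ENNReal.ofReal_sub _ hu0r, ENNReal.ofReal_one, hu_eq]
    by_cases hcase : u ≤ ι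
    · refine le_add_right ?_
      rw [h1u, ← hu_eq, ← ENNReal.ofReal_mul (by linarith : (0:ℝ) ≤ 1 - ι),
        ← ENNReal.ofReal_mul hι_pos.le]
      exact ENNReal.ofReal_le_ofReal (by nlinarith)
    · push_neg at hcase
      have hu_pos : 0 < u := lt_trans hι_pos hcase
      have hK_eq : K t = ∫⁻ x in U t,
          ENNReal.ofReal x⁻¹ * min (F t) (ENNReal.ofReal x) ∂volume := by
        simp only [hK_def]
        rw [hX_law, restrict_withDensity (hU_meas t),
          lintegral_withDensity_eq_lintegral_mul _
            (show Measurable fun x : ℝ => ENNReal.ofReal x⁻¹ from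
              ENNReal.measurable_ofReal.comp measurable_inv)
            (measurable_const.min ENNReal.measurable_ofReal),
          Measure.restrict_restrict (hU_meas t),
          Set.inter_eq_self_of_subset_left Set.inter_subset_right]
        rfl
      have hK_lb : ENNReal.ofReal (u - ι) ≤ K t := by
        rw [hK_eq]
        calc ENNReal.ofReal (u - ι) = volume (Set.Ioo ι u) := (Real.volume_Ioo).symm
          _ = ∫⁻ _x in Set.Ioo ι u, 1 ∂volume := (setLIntegral_one _).symm
          _ = ∫⁻ x in Set.Ioo ι u,
                ENNReal.ofReal x⁻¹ * min (F t) (ENNReal.ofReal x) ∂volume := by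
              refine setLIntegral_congr_fun measurableSet_Ioo (fun x hx => ?_)
              have hx0 : 0 < x := lt_trans hι_pos hx.1
              have hxu : ENNReal.ofReal x ≤ F t := by
                rw [← hu_eq]; exact ENNReal.ofReal_le_ofReal hx.2.le
              rw [min_eq_right hxu, ← ENNReal.ofReal_mul (inv_nonneg.mpr hx0.le),
                inv_mul_cancel₀ (ne_of_gt hx0), ENNReal.ofReal_one]
          _ ≤ ∫⁻ x in U t,
                ENNReal.ofReal x⁻¹ * min (F t) (ENNReal.ofReal x) ∂volume := by
              refine lintegral_mono_set fun x hx => ?_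
              refine ⟨?_, le_of_lt hx.1, le_trans hx.2.le hu1r⟩
              rw [← hu_eq]
              exact (ENNReal.ofReal_lt_ofReal_iff hu_pos).mpr hx.2
      have harith : ENNReal.ofReal (1 - ι) * F t
          = ENNReal.ofReal ι * (1 - F t) + ENNReal.ofReal (u - ι) := by
        rw [h1u, ← hu_eq, ← ENNReal.ofReal_mul (by linarith : (0:ℝ) ≤ 1 - ι),
          ← ENNReal.ofReal_mul hι_pos.le,
          ← ENNReal.ofReal_add (by nlinarith) (by linarith)]
        congr 1; ring
      rw [harith]
      exact add_le_add le_rfl hK_lb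
  -- layer cake identities
  have hT_layer : ∫⁻ ω, ENNReal.ofReal (T ω) ∂P
      = ∫⁻ t in Set.Ioi (0:ℝ), P (Trade ∩ {ω | s ω ≤ t ∧ t < b ω}) := by
    rw [← layer_aux P hsm hbm hs0 hTrade_meas]
    refine lintegral_congr fun ω => ?_
    by_cases h : ω ∈ Trade
    · rw [Set.indicator_of_mem h]
      simp only [hT_def]
      rw [if_pos (show s ω ≤ q (X ω) ∧ q (X ω) ≤ b ω from h), mul_one]
    · rw [Set.indicator_of_notMem h]
      simp only [hT_def]
      rw [if_neg (show ¬(s ω ≤ q (X ω) ∧ q (X ω) ≤ b ω) from h), mul_zero,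
        ENNReal.ofReal_zero]
  have hD_layer : ∫⁻ ω, ENNReal.ofReal (b ω - s ω) ∂P
      = ∫⁻ t in Set.Ioi (0:ℝ), F t * β t := by
    have h0 := layer_aux P hsm hbm hs0 MeasurableSet.univ
    simp only [Set.indicator_univ, Set.univ_inter] at h0
    rw [h0]
    refine lintegral_congr fun t => ?_
    have hset : {ω | s ω ≤ t ∧ t < b ω} = s ⁻¹' (Set.Iic t) ∩ b ⁻¹' (Set.Ioi t) := rfl
    rw [hset, hsb_indep.measure_inter_preimage_eq_mul _ _ measurableSet_Iic measurableSet_Ioi]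
    rfl
  have hS_layer : ∫⁻ ω, ENNReal.ofReal (s ω) ∂P
      = ∫⁻ t in Set.Ioi (0:ℝ), P {ω | t < s ω} := by
    have h0 := layer_aux P (f := fun _ => (0:ℝ)) measurable_const hsm
      (fun ω => le_refl 0) MeasurableSet.univ
    simp only [Set.indicator_univ, Set.univ_inter, sub_zero] at h0
    rw [h0]
    refine setLIntegral_congr_fun measurableSet_Ioi (fun t ht => ?_)
    congr 1
    ext ω
    exact and_iff_right (le_of_lt ht)
  -- abbreviations
  set S : ℝ≥0∞ := ∫⁻ ω, ENNReal.ofReal (s ω) ∂P with hS_def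
  set D : ℝ≥0∞ := ∫⁻ ω, ENNReal.ofReal (b ω - s ω) ∂P with hD_def
  set Tl : ℝ≥0∞ := ∫⁻ ω, ENNReal.ofReal (T ω) ∂P with hTl_def
  set M : ℝ≥0∞ := ∫⁻ ω, ENNReal.ofReal (max (s ω) (b ω)) ∂P with hM_def
  have hM_eq : M = S + D := by
    rw [hM_def, hS_def, hD_def, ← lintegral_add_left (f := fun ω => ENNReal.ofReal (s ω))
      (ENNReal.measurable_ofReal.comp hsm)]
    refine lintegral_congr fun ω => ?_
    rcases le_total (s ω) (b ω) with h | h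
    · rw [max_eq_right h, ← ENNReal.ofReal_add (hs0 ω) (sub_nonneg.mpr h)]
      congr 1; ring
    · rw [max_eq_left h, ENNReal.ofReal_of_nonpos (sub_nonpos.mpr h), add_zero]
  -- pointwise properties of T
  have hT_nonneg : ∀ ω, 0 ≤ T ω := by
    intro ω
    simp only [hT_def]
    by_cases h : s ω ≤ q (X ω) ∧ q (X ω) ≤ b ω
    · rw [if_pos h, mul_one]
      exact sub_nonneg.mpr (le_trans h.1 h.2)
    · rw [if_neg h, mul_zero]
  have hT_le_b : ∀ ω, T ω ≤ b ω := by
    intro ω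
    simp only [hT_def]
    by_cases h : s ω ≤ q (X ω) ∧ q (X ω) ≤ b ω
    · rw [if_pos h, mul_one]
      have := hs0 ω; linarith
    · rw [if_neg h, mul_zero]; exact hb0 ω
  have hT_meas : Measurable T :=
    (hbm.sub hsm).mul (Measurable.ite hTrade_meas measurable_const measurable_const)
  have hTi : Integrable T P := by
    refine hbi.mono' hT_meas.aestronglyMeasurable (ae_of_all _ fun ω => ?_)
    rw [Real.norm_eq_abs, abs_of_nonneg (hT_nonneg ω)]
    exact hT_le_b ω
  -- finiteness
  have hB_fin : ∫⁻ ω, ENNReal.ofReal (b ω) ∂P ≠ ⊤ := by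
    refine ne_of_lt (lt_of_le_of_lt (lintegral_mono fun ω => Real.ofReal_le_enorm _)
      hbi.hasFiniteIntegral)
  have hS_fin : S ≠ ⊤ := by
    refine ne_of_lt (lt_of_le_of_lt (lintegral_mono fun ω => Real.ofReal_le_enorm _)
      hsi.hasFiniteIntegral)
  have hTl_fin : Tl ≠ ⊤ := by
    refine ne_of_lt (lt_of_le_of_lt (lintegral_mono fun ω =>
      ENNReal.ofReal_le_ofReal (hT_le_b ω)) (lt_of_le_of_ne le_top hB_fin))
  have hD_fin : D ≠ ⊤ := by
    refine ne_of_lt (lt_of_le_of_lt (lintegral_mono fun ω =>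
      ENNReal.ofReal_le_ofReal (by have := hs0 ω; linarith)) (lt_of_le_of_ne le_top hB_fin))
  have hM_fin : M ≠ ⊤ := by
    rw [hM_eq]; exact ENNReal.add_ne_top.mpr ⟨hS_fin, hD_fin⟩
  -- main ENNReal inequality
  have hmain : ENNReal.ofReal (1 - ι) * M ≤ S + Tl := by
    have hS_lb : ∫⁻ t in Set.Ioi (0:ℝ), (1 - F t) * β t ≤ S := by
      rw [hS_layer]
      refine lintegral_mono fun t => ?_
      have hc : P {ω | t < s ω} = 1 - F t := by
        rw [← prob_compl_eq_one_sub (measurableSet_le hsm measurable_const)]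
        congr 1
        ext ω
        simp [not_le]
      calc (1 - F t) * β t ≤ (1 - F t) * 1 := mul_le_mul_right (hβ_le_one t) _
        _ = 1 - F t := mul_one _
        _ = P {ω | t < s ω} := hc.symm
    have hTl_lb : ∫⁻ t in Set.Ioi (0:ℝ), K t * β t ≤ Tl := by
      rw [hT_layer]
      exact lintegral_mono hcore
    have h1 : ENNReal.ofReal (1 - ι) * D ≤ ENNReal.ofReal ι * S + Tl := by
      calc ENNReal.ofReal (1 - ι) * D
          = ∫⁻ t in Set.Ioi (0:ℝ), ENNReal.ofReal (1 - ι) * (F t * β t) := by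
            rw [hD_layer, ← lintegral_const_mul' _ _ ENNReal.ofReal_ne_top]
        _ ≤ ∫⁻ t in Set.Ioi (0:ℝ),
              (ENNReal.ofReal ι * ((1 - F t) * β t) + K t * β t) := by
            refine lintegral_mono fun t => ?_
            calc ENNReal.ofReal (1 - ι) * (F t * β t)
                = (ENNReal.ofReal (1 - ι) * F t) * β t := by rw [mul_assoc]
              _ ≤ (ENNReal.ofReal ι * (1 - F t) + K t) * β t :=
                  mul_le_mul_left (hscalar t) _
              _ = ENNReal.ofReal ι * ((1 - F t) * β t) + K t * β t := by ring
        _ = (∫⁻ t in Set.Ioi (0:ℝ), ENNReal.ofReal ι * ((1 - F t) * β t))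
              + ∫⁻ t in Set.Ioi (0:ℝ), K t * β t :=
            lintegral_add_left
              (measurable_const.mul ((measurable_const.sub hF_meas).mul hβ_meas)) _
        _ ≤ ENNReal.ofReal ι * S + Tl := by
            refine add_le_add ?_ hTl_lb
            rw [lintegral_const_mul' _ _ ENNReal.ofReal_ne_top]
            exact mul_le_mul_right hS_lb _
    calc ENNReal.ofReal (1 - ι) * M
        = ENNReal.ofReal (1 - ι) * S + ENNReal.ofReal (1 - ι) * D := by
          rw [hM_eq, mul_add]
      _ ≤ ENNReal.ofReal (1 - ι) * S + (ENNReal.ofReal ι * S + Tl) := add_le_add le_rfl h1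
      _ = (ENNReal.ofReal (1 - ι) + ENNReal.ofReal ι) * S + Tl := by ring
      _ = S + Tl := by
          rw [← ENNReal.ofReal_add (by linarith) hι_pos.le]
          have hone : (1 - ι) + ι = 1 := by ring
          rw [hone, ENNReal.ofReal_one, one_mul]
  -- back to real integrals
  have h_goal_lhs : ∫ ω, (s ω + (b ω - s ω) *
        (if s ω ≤ q (X ω) ∧ q (X ω) ≤ b ω then (1:ℝ) else 0)) ∂P
      = S.toReal + Tl.toReal := by
    have h1 : (fun ω => s ω + (b ω - s ω) *
        (if s ω ≤ q (X ω) ∧ q (X ω) ≤ b ω then (1:ℝ) else 0)) = fun ω => s ω + T ω := rfl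
    rw [h1, integral_add hsi hTi]
    congr 1
    · rw [integral_eq_lintegral_of_nonneg_ae (ae_of_all _ hs0) hsm.aestronglyMeasurable]
    · rw [integral_eq_lintegral_of_nonneg_ae (ae_of_all _ hT_nonneg)
        hT_meas.aestronglyMeasurable]
  have h_goal_rhs : ∫ ω, max (s ω) (b ω) ∂P = M.toReal := by
    rw [integral_eq_lintegral_of_nonneg_ae (ae_of_all _ fun ω => le_trans (hs0 ω) (le_max_left _ _))
      (hsm.max hbm).aestronglyMeasurable]
  rw [ge_iff_le, h_goal_lhs, h_goal_rhs]
  have h2 : (ENNReal.ofReal (1 - ι) * M).toReal ≤ (S + Tl).toReal :=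
    ENNReal.toReal_mono (ENNReal.add_ne_top.mpr ⟨hS_fin, hTl_fin⟩) hmain
  rw [ENNReal.toReal_mul, ENNReal.toReal_ofReal (by linarith), ENNReal.toReal_add hS_fin hTl_fin]
    at h2
  exact h2
end

section
/- Let s and b be independent nonnegative integrable real-valued random variables, and suppose the seller's distribution admits a quantile function q : [1/e, 1] → ℝ with P(s ≤ q(x)) = x and P(s < q(x)) = x for every x ∈ [1/e, 1]. Then there exists a deterministic price p ∈ ℝ such that E[s + (b − s)·𝟙{s ≤ p ∧ p ≤ b}] ≥ (1 − 1/e)·E[max(s, b)]. -/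
open MeasureTheory ProbabilityTheory Set

section BilateralTradeAux

local notation "ee" => (Real.exp 1)⁻¹




lemma bt_e1_pos : (0:ℝ) < ee := inv_pos.2 (Real.exp_pos 1)

lemma bt_e1_lt_one : (ee:ℝ) < 1 := by
  rw [inv_lt_one_iff₀]
  right
  exact Real.one_lt_exp_iff.2 one_pos

lemma bt_log_e1 : Real.log ee = -1 := by
  rw [Real.log_inv, Real.log_exp]

/-- helper: a monotone countable union bound -/
lemma bt_measure_iUnion_le {ν : Measure ℝ} {A : ℕ → Set ℝ} (hmono : Monotone A)
    {C : ENNReal} (h : ∀ n, ν (A n) ≤ C) : ν (⋃ n, A n) ≤ C := by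
  rw [Directed.measure_iUnion (hmono.directed_le)]
  exact iSup_le h

/-- Key CDF fact: `ν {a | F a ≤ x} = x` whenever `x` is attained as `ν (Iic t)`. -/
lemma bt_meas_cdf_le (ν : Measure ℝ) [IsProbabilityMeasure ν] {x t : ℝ} (hx0 : 0 ≤ x)
    (ht : ν (Set.Iic t) = ENNReal.ofReal x) :
    ν {a | ν (Set.Iic a) ≤ ENNReal.ofReal x} = ENNReal.ofReal x := by
  set I := {a : ℝ | ν (Set.Iic a) ≤ ENNReal.ofReal x} with hI
  have hdc : ∀ {a a' : ℝ}, a ≤ a' → a' ∈ I → a ∈ I := fun h h' =>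
    le_trans (measure_mono (Set.Iic_subset_Iic.2 h)) h'
  have htI : t ∈ I := le_of_eq ht
  have hlow : ENNReal.ofReal x ≤ ν I := by
    rw [← ht]
    exact measure_mono (fun a ha => hdc ha htI)
  refine le_antisymm ?_ hlow
  by_cases hb : BddAbove I
  · by_cases hm : sSup I ∈ I
    · calc ν I ≤ ν (Set.Iic (sSup I)) := measure_mono (fun a ha => le_csSup hb ha)
        _ ≤ ENNReal.ofReal x := hm
    · have hsub : I ⊆ Set.Iio (sSup I) := fun a ha =>
        lt_of_le_of_ne (le_csSup hb ha) (by rintro rfl; exact hm ha)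
      have hcover : Set.Iio (sSup I) ⊆ ⋃ n : ℕ, Set.Iic (sSup I - 1/(n+1)) := by
        intro a ha
        obtain ⟨n, hn⟩ := exists_nat_one_div_lt (sub_pos.2 (Set.mem_Iio.1 ha))
        exact Set.mem_iUnion.2 ⟨n, by simp only [Set.mem_Iic]; linarith⟩
      have hmono : Monotone (fun n : ℕ => Set.Iic (sSup I - 1/(n+1))) := by
        intro i j hij
        apply Set.Iic_subset_Iic.2
        have : (1:ℝ)/(j+1) ≤ 1/(i+1) := by
          apply one_div_le_one_div_of_le (by positivity)
          have := (Nat.cast_le (α := ℝ)).2 hij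
          linarith
        linarith
      refine le_trans (measure_mono (hsub.trans hcover)) (bt_measure_iUnion_le hmono ?_)
      intro n
      have hlt : sSup I - 1/(n+1) < sSup I := by
        have : (0:ℝ) < 1/(n+1) := by positivity
        linarith
      obtain ⟨a, haI, hra⟩ := exists_lt_of_lt_csSup ⟨t, htI⟩ hlt
      exact hdc hra.le haI
  · have huniv : I = Set.univ := Set.eq_univ_of_forall (fun r => by
      obtain ⟨a, haI, hra⟩ := not_bddAbove_iff.1 hb r
      exact hdc hra.le haI)
    have h1 : ν Set.univ ≤ ENNReal.ofReal x := by
      have hc : Set.univ = ⋃ n : ℕ, Set.Iic ((n:ℝ)) := by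
        ext a; simp only [Set.mem_univ, true_iff, Set.mem_iUnion, Set.mem_Iic]
        obtain ⟨n, hn⟩ := exists_nat_ge a
        exact ⟨n, hn⟩
      rw [hc]
      refine bt_measure_iUnion_le (fun i j hij => Set.Iic_subset_Iic.2 (by exact_mod_cast hij)) ?_
      intro n
      have : (n:ℝ) ∈ I := by rw [huniv]; trivial
      exact this
    rw [huniv]
    exact h1






lemma bt_lint_inv (u r : ℝ) (hu : 0 < u) (hur : u ≤ r) :
    ∫⁻ x in Set.Ioo u r, ENNReal.ofReal x⁻¹ ∂(volume : Measure ℝ)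
      = ENNReal.ofReal (Real.log r - Real.log u) := by
  have hne : ∀ x ∈ Set.uIcc u r, x ≠ 0 := by
    intro x hx
    rw [Set.uIcc_of_le hur] at hx
    exact ne_of_gt (lt_of_lt_of_le hu hx.1)
  have hint : IntervalIntegrable (fun x : ℝ => x⁻¹) volume u r :=
    intervalIntegral.intervalIntegrable_inv hne continuousOn_id
  have hIoc : IntegrableOn (fun x : ℝ => x⁻¹) (Set.Ioc u r) volume := by
    simpa [intervalIntegrable_iff_integrableOn_Ioc_of_le hur] using hint
  have hIoo : IntegrableOn (fun x : ℝ => x⁻¹) (Set.Ioo u r) volume :=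
    hIoc.mono_set Set.Ioo_subset_Ioc_self
  have hnn : 0 ≤ᵐ[volume.restrict (Set.Ioo u r)] fun x : ℝ => x⁻¹ := by
    filter_upwards [ae_restrict_mem measurableSet_Ioo] with x hx
    exact le_of_lt (inv_pos.2 (lt_trans hu hx.1))
  rw [← ofReal_integral_eq_lintegral_ofReal hIoo hnn]
  congr 1
  have h1 : ∫ x in Set.Ioo u r, x⁻¹ ∂volume = ∫ x in Set.Ioc u r, x⁻¹ ∂volume := by
    exact setIntegral_congr_set Ioo_ae_eq_Ioc
  rw [h1, ← intervalIntegral.integral_of_le hur, integral_inv_of_pos hu (lt_of_lt_of_le hu hur),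
    Real.log_div (ne_of_gt (lt_of_lt_of_le hu hur)) (ne_of_gt hu)]

noncomputable def btKappa : Measure ℝ :=
  (volume.restrict (Set.Ioo ((Real.exp 1)⁻¹) 1)).withDensity (fun x => ENNReal.ofReal x⁻¹)

lemma btKappa_Ioo {u r : ℝ} (hu : ee ≤ u) (hr : r ≤ 1) (hur : u ≤ r) :
    btKappa (Set.Ioo u r) = ENNReal.ofReal (Real.log r - Real.log u) := by
  have hupos : 0 < u := lt_of_lt_of_le bt_e1_pos hu
  rw [btKappa, withDensity_apply _ measurableSet_Ioo,
    Measure.restrict_restrict measurableSet_Ioo]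
  have hss : Set.Ioo u r ∩ Set.Ioo ee 1 = Set.Ioo u r := by
    apply Set.inter_eq_self_of_subset_left
    intro x hx
    exact ⟨lt_of_le_of_lt hu hx.1, lt_of_lt_of_le hx.2 hr⟩
  rw [hss, bt_lint_inv u r hupos hur]

instance btKappa_prob : IsProbabilityMeasure btKappa := by
  constructor
  have h : btKappa Set.univ = btKappa (Set.Ioo ee 1) := by
    rw [btKappa, withDensity_apply _ MeasurableSet.univ, withDensity_apply _ measurableSet_Ioo,
      Measure.restrict_restrict measurableSet_Ioo, Measure.restrict_univ]
    congr 1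
    · exact (Set.inter_eq_self_of_subset_left (fun x hx => hx)).symm ▸ rfl
  rw [h, btKappa_Ioo (le_refl _) (le_refl _) (le_of_lt (by
    rw [inv_lt_one_iff₀]; right; exact Real.one_lt_exp_iff.2 one_pos))]
  rw [Real.log_one, Real.log_inv, Real.log_exp]
  norm_num






noncomputable def btPsi (ν : Measure ℝ) (a c : ℝ) : ℝ :=
  max 0 (Real.log (max ((ν (Set.Iio c)).toReal) ((Real.exp 1)⁻¹)) -
         Real.log (max ((ν (Set.Iic a)).toReal) ((Real.exp 1)⁻¹)))

lemma btPsi_nonneg (ν : Measure ℝ) (a c : ℝ) : 0 ≤ btPsi ν a c := le_max_left _ _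

lemma bt_toReal_le_one (ν : Measure ℝ) [IsProbabilityMeasure ν] (S : Set ℝ) :
    (ν S).toReal ≤ 1 := by
  rw [← ENNReal.toReal_one]
  exact ENNReal.toReal_mono ENNReal.one_ne_top prob_le_one

lemma btPsi_le_one (ν : Measure ℝ) [IsProbabilityMeasure ν] (a c : ℝ) : btPsi ν a c ≤ 1 := by
  apply max_le zero_le_one
  have h1 : Real.log (max ((ν (Set.Iio c)).toReal) ee) ≤ 0 := by
    apply Real.log_nonpos (le_max_of_le_right bt_e1_pos.le)
    exact max_le (bt_toReal_le_one ν _) bt_e1_lt_one.le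
  have h2 : (-1 : ℝ) ≤ Real.log (max ((ν (Set.Iic a)).toReal) ee) := by
    rw [← bt_log_e1]
    exact Real.log_le_log bt_e1_pos (le_max_right _ _)
  linarith

lemma bt_F_measurable (ν : Measure ℝ) [IsFiniteMeasure ν] :
    Measurable (fun a : ℝ => (ν (Set.Iic a)).toReal) := by
  have hmono : Monotone (fun a : ℝ => (ν (Set.Iic a)).toReal) := fun a a' h =>
    ENNReal.toReal_mono (measure_ne_top _ _) (measure_mono (Set.Iic_subset_Iic.2 h))
  exact hmono.measurable

lemma btPsi_measurable (ν : Measure ℝ) [IsFiniteMeasure ν] (c : ℝ) :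
    Measurable (fun a : ℝ => btPsi ν a c) := by
  apply measurable_const.max
  exact measurable_const.sub
    (Real.measurable_log.comp ((bt_F_measurable ν).max measurable_const))

lemma bt_rho_Iic (ν : Measure ℝ) [IsProbabilityMeasure ν]
    (hA : ∀ y ∈ Set.Icc ee 1, ν {a | ν (Set.Iic a) ≤ ENNReal.ofReal y} = ENNReal.ofReal y)
    {y : ℝ} (hy : y ∈ Set.Icc ee 1) :
    (ν.map (fun a => (ν (Set.Iic a)).toReal)) (Set.Iic y) = ENNReal.ofReal y := by
  rw [Measure.map_apply (bt_F_measurable ν) measurableSet_Iic]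
  have hset : (fun a : ℝ => (ν (Set.Iic a)).toReal) ⁻¹' (Set.Iic y)
      = {a | ν (Set.Iic a) ≤ ENNReal.ofReal y} := by
    ext a
    simp only [Set.mem_preimage, Set.mem_Iic, Set.mem_setOf_eq]
    rw [ENNReal.le_ofReal_iff_toReal_le (measure_ne_top _ _) (le_trans bt_e1_pos.le hy.1)]
  rw [hset]
  exact hA y hy

lemma bt_rho_Ioc (ν : Measure ℝ) [IsProbabilityMeasure ν]
    (hA : ∀ y ∈ Set.Icc ee 1, ν {a | ν (Set.Iic a) ≤ ENNReal.ofReal y} = ENNReal.ofReal y)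
    {x y : ℝ} (h1 : ee ≤ x) (h2 : x ≤ y) (h3 : y ≤ 1) :
    (ν.map (fun a => (ν (Set.Iic a)).toReal)) (Set.Ioc x y) = ENNReal.ofReal (y - x) := by
  have hxy : Set.Ioc x y = Set.Iic y \ Set.Iic x := by ext z; simp [and_comm]
  rw [hxy, measure_diff (Set.Iic_subset_Iic.2 h2) measurableSet_Iic.nullMeasurableSet
      (measure_ne_top _ _),
    bt_rho_Iic ν hA ⟨le_trans h1 h2, h3⟩, bt_rho_Iic ν hA ⟨h1, le_trans h2 h3⟩,
    ← ENNReal.ofReal_sub _ (le_trans bt_e1_pos.le h1)]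

lemma bt_rho_restrict (ν : Measure ℝ) [IsProbabilityMeasure ν]
    (hA : ∀ y ∈ Set.Icc ee 1, ν {a | ν (Set.Iic a) ≤ ENNReal.ofReal y} = ENNReal.ofReal y) :
    (ν.map (fun a => (ν (Set.Iic a)).toReal)).restrict (Set.Ioc ee 1)
      = volume.restrict (Set.Ioc ee 1) := by
  haveI : IsProbabilityMeasure (ν.map (fun a => (ν (Set.Iic a)).toReal)) :=
    Measure.isProbabilityMeasure_map (bt_F_measurable ν).aemeasurable
  apply Measure.ext_of_Ioc_finite
  · rw [Measure.restrict_apply_univ, Measure.restrict_apply_univ,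
      bt_rho_Ioc ν hA le_rfl bt_e1_lt_one.le le_rfl, Real.volume_Ioc]
  · intro a b _
    rw [Measure.restrict_apply measurableSet_Ioc, Measure.restrict_apply measurableSet_Ioc,
      Set.Ioc_inter_Ioc]
    rcases le_or_gt (a ⊔ ee) (b ⊓ 1) with h | h
    · rw [bt_rho_Ioc ν hA le_sup_right h inf_le_right, Real.volume_Ioc]
    · rw [Set.Ioc_eq_empty (not_lt.2 h.le)]
      simp

lemma bt_G2_integral (ν : Measure ℝ) [IsProbabilityMeasure ν]
    (hA : ∀ y ∈ Set.Icc ee 1, ν {a | ν (Set.Iic a) ≤ ENNReal.ofReal y} = ENNReal.ofReal y)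
    {v : ℝ} (hv1 : ee < v) (hv2 : v ≤ 1) :
    ∫ a, (Set.Ioc ee v).indicator (fun u => 1 + Real.log u - Real.log v)
        ((ν (Set.Iic a)).toReal) ∂ν = ee * (1 + Real.log v) := by
  have hFm := bt_F_measurable ν
  have hφm : Measurable (fun u : ℝ => 1 + Real.log u - Real.log v) :=
    (measurable_const.add Real.measurable_log).sub measurable_const
  have hind : Measurable ((Set.Ioc ee v).indicator (fun u => 1 + Real.log u - Real.log v)) :=
    hφm.indicator measurableSet_Ioc
  rw [← integral_map hFm.aemeasurable hind.aestronglyMeasurable,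
    integral_indicator measurableSet_Ioc]
  have hres : (ν.map (fun a => (ν (Set.Iic a)).toReal)).restrict (Set.Ioc ee v)
      = volume.restrict (Set.Ioc ee v) := by
    have hsub : Set.Ioc ee v ∩ Set.Ioc ee 1 = Set.Ioc ee v :=
      Set.inter_eq_self_of_subset_left (Set.Ioc_subset_Ioc_right hv2)
    calc (ν.map (fun a => (ν (Set.Iic a)).toReal)).restrict (Set.Ioc ee v)
        = ((ν.map (fun a => (ν (Set.Iic a)).toReal)).restrict (Set.Ioc ee 1)).restrict
            (Set.Ioc ee v) := by
          rw [Measure.restrict_restrict measurableSet_Ioc, hsub]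
      _ = (volume.restrict (Set.Ioc ee 1)).restrict (Set.Ioc ee v) := by
          rw [bt_rho_restrict ν hA]
      _ = volume.restrict (Set.Ioc ee v) := by
          rw [Measure.restrict_restrict measurableSet_Ioc, hsub]
  rw [hres, ← intervalIntegral.integral_of_le hv1.le]
  have h0 : (0:ℝ) ∉ Set.uIcc ee v := by
    rw [Set.uIcc_of_le hv1.le]
    intro h
    exact absurd h.1 (not_le.2 bt_e1_pos)
  have hlog := integral_log (a := ee) (b := v)
  have hconst : IntervalIntegrable (fun _ : ℝ => 1 - Real.log v) volume ee v :=
    intervalIntegrable_const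
  have hlogint : IntervalIntegrable Real.log volume ee v := intervalIntegral.intervalIntegrable_log h0
  have heq : (fun u : ℝ => 1 + Real.log u - Real.log v)
      = fun u : ℝ => (1 - Real.log v) + Real.log u := by funext u; ring
  rw [heq, intervalIntegral.integral_add hconst hlogint, intervalIntegral.integral_const, hlog,
    bt_log_e1]
  simp only [smul_eq_mul]
  ring



lemma bt_perC (ν : Measure ℝ) [IsProbabilityMeasure ν]
    (hA : ∀ y ∈ Set.Icc ee 1, ν {a | ν (Set.Iic a) ≤ ENNReal.ofReal y} = ENNReal.ofReal y)
    (ha0 : ∀ᵐ a ∂ν, 0 ≤ a)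
    (hid : Integrable (fun a : ℝ => a) ν)
    {c : ℝ} (hc : 0 ≤ c) :
    ∫ a, max (c - a) 0 * (1 - btPsi ν a c) ∂ν ≤ c * ee := by
  have hFm := bt_F_measurable ν
  have hψm := btPsi_measurable ν c
  have hv0 : (0:ℝ) ≤ (ν (Set.Iio c)).toReal := ENNReal.toReal_nonneg
  have hv1 : (ν (Set.Iio c)).toReal ≤ 1 := bt_toReal_le_one ν _
  set v : ℝ := (ν (Set.Iio c)).toReal with hv
  -- the inner function
  set g : ℝ → ℝ := (Set.Iio c).indicator (fun a => 1 - btPsi ν a c) with hg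
  have hgm : Measurable g := (measurable_const.sub hψm).indicator measurableSet_Iio
  have hg01 : ∀ a, 0 ≤ g a ∧ g a ≤ 1 := by
    intro a
    rw [hg, Set.indicator_apply]
    split_ifs
    · exact ⟨by linarith [btPsi_le_one ν a c], by linarith [btPsi_nonneg ν a c]⟩
    · exact ⟨le_rfl, zero_le_one⟩
  have hgi : Integrable g ν := by
    refine Integrable.mono' (integrable_const (1:ℝ)) hgm.aestronglyMeasurable ?_
    filter_upwards with a
    rw [Real.norm_eq_abs, abs_of_nonneg (hg01 a).1]
    exact (hg01 a).2
  -- step 2 : ∫ g ≤ ee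
  have hK : ∫ a, g a ∂ν ≤ ee := by
    by_cases hvee : v ≤ ee
    · have hpt : ∀ a, g a ≤ (Set.Iio c).indicator (fun _ => (1:ℝ)) a := by
        intro a
        rw [hg, Set.indicator_apply, Set.indicator_apply]
        split_ifs
        · linarith [btPsi_nonneg ν a c]
        · exact le_rfl
      calc ∫ a, g a ∂ν ≤ ∫ a, (Set.Iio c).indicator (fun _ => (1:ℝ)) a ∂ν :=
            integral_mono hgi ((integrable_const (1:ℝ)).indicator measurableSet_Iio) hpt
        _ = (ν (Set.Iio c)).toReal := by
            rw [integral_indicator_const (1:ℝ) measurableSet_Iio, smul_eq_mul, mul_one, measureReal_def]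
        _ ≤ ee := hvee
    · push_neg at hvee
      set G1 : ℝ → ℝ :=
        ({a : ℝ | ν (Set.Iic a) ≤ ENNReal.ofReal ee}).indicator (fun _ => -Real.log v) with hG1
      set G2 : ℝ → ℝ := fun a => (Set.Ioc ee v).indicator
        (fun u => 1 + Real.log u - Real.log v) ((ν (Set.Iic a)).toReal) with hG2
      have hSmeas : MeasurableSet {a : ℝ | ν (Set.Iic a) ≤ ENNReal.ofReal ee} := by
        have : {a : ℝ | ν (Set.Iic a) ≤ ENNReal.ofReal ee}
            = (fun a : ℝ => (ν (Set.Iic a)).toReal) ⁻¹' (Set.Iic ee) := by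
          ext a
          simp only [Set.mem_setOf_eq, Set.mem_preimage, Set.mem_Iic]
          rw [ENNReal.le_ofReal_iff_toReal_le (measure_ne_top _ _) bt_e1_pos.le]
        rw [this]
        exact hFm measurableSet_Iic
      have hlogv_le : Real.log v ≤ 0 := Real.log_nonpos hv0 hv1
      have hlogv_gt : (-1:ℝ) < Real.log v := by
        rw [← bt_log_e1]
        exact Real.log_lt_log bt_e1_pos hvee
      have hpt : ∀ a, g a ≤ G1 a + G2 a := by
        intro a
        have hG1nn : 0 ≤ G1 a := by
          rw [hG1, Set.indicator_apply]
          split_ifs <;> simp [hlogv_le]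
        have hG2nn : 0 ≤ G2 a := by
          show (0:ℝ) ≤ (Set.Ioc ee v).indicator (fun u => 1 + Real.log u - Real.log v)
            ((ν (Set.Iic a)).toReal)
          rw [Set.indicator_apply]
          split_ifs with hmem
          · have : Real.log ee ≤ Real.log ((ν (Set.Iic a)).toReal) :=
              Real.log_le_log bt_e1_pos hmem.1.le
            rw [bt_log_e1] at this
            linarith
          · exact le_rfl
        by_cases hac : a < c
        · have hFa_le_v : (ν (Set.Iic a)).toReal ≤ v :=
            ENNReal.toReal_mono (measure_ne_top _ _)
              (measure_mono (fun x hx => lt_of_le_of_lt hx hac))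
          have hRmax : max v ee = v := max_eq_left hvee.le
          have hga : g a = 1 - btPsi ν a c := by
            rw [hg, Set.indicator_of_mem (Set.mem_Iio.2 hac)]
          by_cases hue : (ν (Set.Iic a)).toReal ≤ ee
          · have hUmax : max ((ν (Set.Iic a)).toReal) ee = ee := max_eq_right hue
            have hψval : btPsi ν a c = Real.log v + 1 := by
              rw [btPsi, ← hv, hRmax, hUmax, bt_log_e1]
              rw [max_eq_right]
              · ring
              · linarith
            have hG1a : G1 a = -Real.log v := by
              apply Set.indicator_of_mem
              rw [Set.mem_setOf_eq, ENNReal.le_ofReal_iff_toReal_le (measure_ne_top _ _)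
                bt_e1_pos.le]
              exact hue
            rw [hga, hψval, hG1a]
            linarith [hG2nn]
          · push_neg at hue
            have hUmax : max ((ν (Set.Iic a)).toReal) ee = (ν (Set.Iic a)).toReal :=
              max_eq_left hue.le
            have hψval : btPsi ν a c
                = Real.log v - Real.log ((ν (Set.Iic a)).toReal) := by
              rw [btPsi, ← hv, hRmax, hUmax]
              exact max_eq_right (sub_nonneg.2 (Real.log_le_log (lt_trans bt_e1_pos hue) hFa_le_v))
            have hG1a : G1 a = 0 := by
              apply Set.indicator_of_notMem
              rw [Set.mem_setOf_eq, ENNReal.le_ofReal_iff_toReal_le (measure_ne_top _ _)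
                bt_e1_pos.le]
              exact not_le.2 hue
            have hG2a : G2 a = 1 + Real.log ((ν (Set.Iic a)).toReal) - Real.log v := by
              show (Set.Ioc ee v).indicator (fun u => 1 + Real.log u - Real.log v)
                ((ν (Set.Iic a)).toReal) = _
              rw [Set.indicator_of_mem (Set.mem_Ioc.2 ⟨hue, hFa_le_v⟩)]
            rw [hga, hψval, hG1a, hG2a]
            ring_nf
            linarith
        · have hga : g a = 0 := by
            rw [hg, Set.indicator_of_notMem (by simpa using hac)]
          rw [hga]
          exact add_nonneg hG1nn hG2nn
      have hG1i : Integrable G1 ν := (integrable_const (-Real.log v)).indicator hSmeas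
      have hG2i : Integrable G2 ν := by
        have hmeas : Measurable G2 := by
          exact (((measurable_const.add Real.measurable_log).sub measurable_const).indicator
            measurableSet_Ioc).comp hFm
        refine Integrable.mono' (integrable_const (1:ℝ)) hmeas.aestronglyMeasurable ?_
        filter_upwards with a
        show ‖(Set.Ioc ee v).indicator (fun u => 1 + Real.log u - Real.log v)
          ((ν (Set.Iic a)).toReal)‖ ≤ 1
        rw [Real.norm_eq_abs, Set.indicator_apply]
        split_ifs with hmem
        · rw [abs_le]
          constructor
          · have : Real.log ee ≤ Real.log ((ν (Set.Iic a)).toReal) :=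
              Real.log_le_log bt_e1_pos hmem.1.le
            rw [bt_log_e1] at this
            linarith
          · have : Real.log ((ν (Set.Iic a)).toReal) ≤ Real.log v :=
              Real.log_le_log (lt_trans bt_e1_pos hmem.1) hmem.2
            linarith
        · simp
      have hG1int : ∫ a, G1 a ∂ν = -Real.log v * ee := by
        rw [hG1, integral_indicator_const _ hSmeas, measureReal_def, hA ee ⟨le_rfl, bt_e1_lt_one.le⟩,
          ENNReal.toReal_ofReal bt_e1_pos.le, smul_eq_mul]
        ring
      have hG2int : ∫ a, G2 a ∂ν = ee * (1 + Real.log v) :=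
        bt_G2_integral ν hA hvee hv1
      calc ∫ a, g a ∂ν ≤ ∫ a, (G1 a + G2 a) ∂ν := integral_mono hgi (hG1i.add hG2i) hpt
        _ = -Real.log v * ee + ee * (1 + Real.log v) := by
            rw [integral_add hG1i hG2i, hG1int, hG2int]
        _ = ee := by ring
  -- step 1 : pointwise comparison
  have hfi : Integrable (fun a => max (c - a) 0 * (1 - btPsi ν a c)) ν := by
    have hmeas : Measurable (fun a => max (c - a) 0 * (1 - btPsi ν a c)) :=
      ((measurable_const.sub measurable_id).max measurable_const).mul (measurable_const.sub hψm)
    refine Integrable.mono' ((integrable_const |c|).add hid.abs) hmeas.aestronglyMeasurable ?_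
    filter_upwards with a
    rw [Real.norm_eq_abs, abs_mul]
    have h1 : |max (c - a) 0| ≤ |c| + |a| := by
      rw [abs_of_nonneg (le_max_right _ _)]
      rcases le_total (c - a) 0 with h | h
      · rw [max_eq_right h]; positivity
      · rw [max_eq_left h]
        calc c - a ≤ |c - a| := le_abs_self _
          _ ≤ |c| + |a| := abs_sub _ _
    have h2 : |1 - btPsi ν a c| ≤ 1 := by
      rw [abs_le]
      constructor
      · linarith [btPsi_le_one ν a c]
      · linarith [btPsi_nonneg ν a c]
    calc |max (c - a) 0| * |1 - btPsi ν a c| ≤ (|c| + |a|) * 1 :=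
        mul_le_mul h1 h2 (abs_nonneg _) (by positivity)
      _ = |c| + |a| := mul_one _
  have hstep : ∫ a, max (c - a) 0 * (1 - btPsi ν a c) ∂ν ≤ c * ∫ a, g a ∂ν := by
    rw [← integral_const_mul]
    apply integral_mono_ae hfi (hgi.const_mul c)
    filter_upwards [ha0] with a ha0'
    rw [hg, Set.indicator_apply]
    split_ifs with hac
    · have h1 : max (c - a) 0 ≤ c := by
        apply max_le _ hc
        linarith
      have h2 : 0 ≤ 1 - btPsi ν a c := by linarith [btPsi_le_one ν a c]
      exact mul_le_mul_of_nonneg_right h1 h2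
    · have : max (c - a) 0 = 0 := max_eq_right (by simp at hac; linarith)
      rw [this, zero_mul, mul_zero]
  calc ∫ a, max (c - a) 0 * (1 - btPsi ν a c) ∂ν ≤ c * ∫ a, g a ∂ν := hstep
    _ ≤ c * ee := mul_le_mul_of_nonneg_left hK hc




lemma bt_integrable_comp_fst {α β : Type*} [MeasurableSpace α] [MeasurableSpace β]
    {μ : Measure α} (ν' : Measure β) [IsProbabilityMeasure ν'] {g : α → ℝ}
    (hg : Integrable g μ) : Integrable (fun z : α × β => g z.1) (μ.prod ν') := by
  have hmap : (μ.prod ν').map Prod.fst = μ := by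
    rw [Measure.map_fst_prod]; simp
  exact (integrable_map_measure (by rw [hmap]; exact hg.aestronglyMeasurable)
    measurable_fst.aemeasurable).1 (by rw [hmap]; exact hg)

/-- **A deterministic (1 - 1/e)-approximation price always exists.**
Let `s, b` be independent nonnegative integrable random variables and let `q`
be a quantile function of the seller's distribution on `[1/e, 1]` (so
`P(s ≤ q x) = P(s < q x) = x` there). Then some deterministic posted price `p`
achieves expected welfare at least `(1 - 1/e)·E[max(s,b)]`. -/
theorem exists_deterministic_price_one_sub_inv_e
    {Ω : Type*} [MeasurableSpace Ω] {P : Measure Ω} [IsProbabilityMeasure P]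
    (s b : Ω → ℝ)
    (hsm : Measurable s) (hbm : Measurable b)
    (hindep : IndepFun s b P)
    (hs0 : ∀ ω, 0 ≤ s ω) (hb0 : ∀ ω, 0 ≤ b ω)
    (hsi : Integrable s P) (hbi : Integrable b P)
    (q : ℝ → ℝ) (hqm : Measurable q)
    (hq1 : ∀ x ∈ Set.Icc (Real.exp 1)⁻¹ 1, P {ω | s ω ≤ q x} = ENNReal.ofReal x)
    (hq2 : ∀ x ∈ Set.Icc (Real.exp 1)⁻¹ 1, P {ω | s ω < q x} = ENNReal.ofReal x) :
    ∃ p : ℝ,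
      ∫ ω, (s ω + (b ω - s ω) * (if s ω ≤ p ∧ p ≤ b ω then (1:ℝ) else 0)) ∂P
        ≥ (1 - (Real.exp 1)⁻¹) * ∫ ω, max (s ω) (b ω) ∂P := by
  classical
  by_contra hcon
  push_neg at hcon
  set T : ℝ := (1 - ee) * ∫ ω, max (s ω) (b ω) ∂P with hT
  set ν : Measure ℝ := P.map s with hν
  set μb : Measure ℝ := P.map b with hμb
  haveI : IsProbabilityMeasure ν := Measure.isProbabilityMeasure_map hsm.aemeasurable
  haveI : IsProbabilityMeasure μb := Measure.isProbabilityMeasure_map hbm.aemeasurable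
  have hνIic : ∀ p : ℝ, ν (Set.Iic p) = P {ω | s ω ≤ p} := by
    intro p
    rw [hν, Measure.map_apply hsm measurableSet_Iic]
    rfl
  have hνIio : ∀ p : ℝ, ν (Set.Iio p) = P {ω | s ω < p} := by
    intro p
    rw [hν, Measure.map_apply hsm measurableSet_Iio]
    rfl
  have hq1' : ∀ x ∈ Set.Icc (ee:ℝ) 1, ν (Set.Iic (q x)) = ENNReal.ofReal x := by
    intro x hx; rw [hνIic]; exact hq1 x hx
  have hq2' : ∀ x ∈ Set.Icc (ee:ℝ) 1, ν (Set.Iio (q x)) = ENNReal.ofReal x := by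
    intro x hx; rw [hνIio]; exact hq2 x hx
  have hA : ∀ y ∈ Set.Icc (ee:ℝ) 1,
      ν {a | ν (Set.Iic a) ≤ ENNReal.ofReal y} = ENNReal.ofReal y := by
    intro y hy
    exact bt_meas_cdf_le ν (le_trans bt_e1_pos.le hy.1) (hq1' y hy)
  -- the trade set and the key pointwise bound
  set E : Ω → Set ℝ := fun ω => {x | s ω ≤ q x ∧ q x ≤ b ω} with hE
  have hπψ : ∀ ω, btPsi ν (s ω) (b ω) ≤ (btKappa (E ω)).toReal := by
    intro ω
    set U : ℝ := max ((ν (Set.Iic (s ω))).toReal) ee with hU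
    set R : ℝ := max ((ν (Set.Iio (b ω))).toReal) ee with hR
    have hUee : (ee:ℝ) ≤ U := le_max_right _ _
    have hRee : (ee:ℝ) ≤ R := le_max_right _ _
    have hU1 : U ≤ 1 := max_le (bt_toReal_le_one ν _) bt_e1_lt_one.le
    have hR1 : R ≤ 1 := max_le (bt_toReal_le_one ν _) bt_e1_lt_one.le
    have hψ : btPsi ν (s ω) (b ω) = max 0 (Real.log R - Real.log U) := rfl
    rcases le_or_gt R U with hRU | hUR
    · rw [hψ, max_eq_left (sub_nonpos.2 (Real.log_le_log (lt_of_lt_of_le bt_e1_pos hRee) hRU))]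
      exact ENNReal.toReal_nonneg
    · have hsub : Set.Ioo U R ⊆ E ω := by
        intro x hx
        have hxee : (ee:ℝ) < x := lt_of_le_of_lt hUee hx.1
        have hx1 : x < 1 := lt_of_lt_of_le hx.2 hR1
        have hxIcc : x ∈ Set.Icc (ee:ℝ) 1 := ⟨hxee.le, hx1.le⟩
        constructor
        · -- s ω ≤ q x
          by_contra hlt
          push_neg at hlt
          have h1 : ν (Set.Iic (q x)) ≤ ν (Set.Iic (s ω)) :=
            measure_mono (Set.Iic_subset_Iic.2 hlt.le)
          rw [hq1' x hxIcc] at h1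
          have h2 : x ≤ (ν (Set.Iic (s ω))).toReal := by
            have h3 := ENNReal.toReal_mono (measure_ne_top _ _) h1
            rwa [ENNReal.toReal_ofReal (le_trans bt_e1_pos.le hxee.le)] at h3
          exact absurd hx.1 (not_lt.2 (le_trans h2 (le_max_left _ _)))
        · -- q x ≤ b ω
          by_contra hlt
          push_neg at hlt
          have h1 : ν (Set.Iio (b ω)) ≤ ν (Set.Iio (q x)) :=
            measure_mono (Set.Iio_subset_Iio hlt.le)
          rw [hq2' x hxIcc] at h1
          have h2 : (ν (Set.Iio (b ω))).toReal ≤ x := by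
            rw [← ENNReal.le_ofReal_iff_toReal_le (measure_ne_top _ _) (le_trans bt_e1_pos.le hxee.le)]
            exact h1
          have hRx : R ≤ x := max_le h2 hxee.le
          exact absurd hx.2 (not_lt.2 hRx)
      have hκIoo : btKappa (Set.Ioo U R) = ENNReal.ofReal (Real.log R - Real.log U) :=
        btKappa_Ioo hUee hR1 hUR.le
      have hineq : ENNReal.ofReal (Real.log R - Real.log U) ≤ btKappa (E ω) := by
        rw [← hκIoo]
        exact measure_mono hsub
      have := ENNReal.toReal_mono (measure_ne_top _ _) hineq
      rw [ENNReal.toReal_ofReal_eq_iff.2] at this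
      · rw [hψ]
        apply max_le _ this
        exact ENNReal.toReal_nonneg
      · exact sub_nonneg.2 (Real.log_le_log (lt_of_lt_of_le bt_e1_pos hUee) hUR.le)
  -- product function and Fubini
  set f : Ω × ℝ → ℝ := fun z =>
    s z.1 + (b z.1 - s z.1) * (if s z.1 ≤ q z.2 ∧ q z.2 ≤ b z.1 then (1:ℝ) else 0) with hf
  have hTmeas : MeasurableSet {z : Ω × ℝ | s z.1 ≤ q z.2 ∧ q z.2 ≤ b z.1} := by
    have h1 : MeasurableSet {z : Ω × ℝ | s z.1 ≤ q z.2} :=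
      measurableSet_le (hsm.comp measurable_fst) (hqm.comp measurable_snd)
    have h2 : MeasurableSet {z : Ω × ℝ | q z.2 ≤ b z.1} :=
      measurableSet_le (hqm.comp measurable_snd) (hbm.comp measurable_fst)
    exact h1.inter h2
  have hfmeas : Measurable f := by
    apply (hsm.comp measurable_fst).add
    apply ((hbm.comp measurable_fst).sub (hsm.comp measurable_fst)).mul
    exact Measurable.ite hTmeas measurable_const measurable_const
  have hfint : Integrable f (P.prod btKappa) := by
    have hdom : Integrable (fun z : Ω × ℝ => |s z.1| + (|b z.1| + |s z.1|)) (P.prod btKappa) :=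
      bt_integrable_comp_fst btKappa (hsi.abs.add (hbi.abs.add hsi.abs))
    refine Integrable.mono' hdom hfmeas.aestronglyMeasurable ?_
    filter_upwards with z
    rw [Real.norm_eq_abs]
    have hite : |(if s z.1 ≤ q z.2 ∧ q z.2 ≤ b z.1 then (1:ℝ) else 0)| ≤ 1 := by
      split_ifs <;> simp
    calc |s z.1 + (b z.1 - s z.1) * (if s z.1 ≤ q z.2 ∧ q z.2 ≤ b z.1 then (1:ℝ) else 0)|
        ≤ |s z.1| + |(b z.1 - s z.1) * (if s z.1 ≤ q z.2 ∧ q z.2 ≤ b z.1 then (1:ℝ) else 0)| :=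
          abs_add_le _ _
      _ ≤ |s z.1| + (|b z.1| + |s z.1|) := by
          apply add_le_add_right
          rw [abs_mul]
          calc |b z.1 - s z.1| * |(if s z.1 ≤ q z.2 ∧ q z.2 ≤ b z.1 then (1:ℝ) else 0)|
              ≤ |b z.1 - s z.1| * 1 := mul_le_mul_of_nonneg_left hite (abs_nonneg _)
            _ = |b z.1 - s z.1| := mul_one _
            _ ≤ |b z.1| + |s z.1| := abs_sub _ _
  -- inner integral over the price measure
  have hinner : ∀ ω, ∫ x, f (ω, x) ∂btKappa
      = s ω + (b ω - s ω) * (btKappa (E ω)).toReal := by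
    intro ω
    have hEmeas : MeasurableSet (E ω) :=
      (measurableSet_le measurable_const hqm).inter (measurableSet_le hqm measurable_const)
    have hindm : Measurable (fun x : ℝ => (if s ω ≤ q x ∧ q x ≤ b ω then (1:ℝ) else 0)) :=
      Measurable.ite hEmeas measurable_const measurable_const
    have hindi : Integrable (fun x : ℝ => (if s ω ≤ q x ∧ q x ≤ b ω then (1:ℝ) else 0))
        btKappa := by
      refine Integrable.mono' (integrable_const (1:ℝ)) hindm.aestronglyMeasurable ?_
      filter_upwards with x
      rw [Real.norm_eq_abs]
      split_ifs <;> simp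
    have heq : (fun x : ℝ => f (ω, x))
        = fun x => s ω + (b ω - s ω) * (if s ω ≤ q x ∧ q x ≤ b ω then (1:ℝ) else 0) := rfl
    rw [heq, integral_add (integrable_const _) (hindi.const_mul _), integral_const,
      integral_const_mul]
    have hite : ∫ x, (if s ω ≤ q x ∧ q x ≤ b ω then (1:ℝ) else 0) ∂btKappa
        = (btKappa (E ω)).toReal := by
      have hind2 : (fun x : ℝ => (if s ω ≤ q x ∧ q x ≤ b ω then (1:ℝ) else 0))
          = (E ω).indicator (fun _ => (1:ℝ)) := by
        funext x
        rw [Set.indicator_apply]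
        rfl
      rw [hind2, integral_indicator_const _ hEmeas, smul_eq_mul, mul_one, measureReal_def]
    rw [hite]
    simp [measure_univ]
  -- measurability on Ω
  have hGm : Measurable (fun c : ℝ => (ν (Set.Iio c)).toReal) := by
    have hmono : Monotone (fun c : ℝ => (ν (Set.Iio c)).toReal) := fun a a' h =>
      ENNReal.toReal_mono (measure_ne_top _ _) (measure_mono (Set.Iio_subset_Iio h))
    exact hmono.measurable
  have hψsb_meas : Measurable (fun ω => btPsi ν (s ω) (b ω)) := by
    apply measurable_const.max
    exact ((Real.measurable_log.comp ((hGm.comp hbm).max measurable_const)).sub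
      (Real.measurable_log.comp (((bt_F_measurable ν).comp hsm).max measurable_const)))
  -- integrable pieces
  have hmax_int : Integrable (fun ω => max (s ω) (b ω)) P := by
    refine Integrable.mono' (hsi.abs.add hbi.abs) ((hsm.max hbm).aestronglyMeasurable) ?_
    filter_upwards with ω
    rw [Real.norm_eq_abs]
    calc |max (s ω) (b ω)| ≤ max |s ω| |b ω| := abs_max_le_max_abs_abs
      _ ≤ |s ω| + |b ω| := max_le (le_add_of_nonneg_right (abs_nonneg _))
          (le_add_of_nonneg_left (abs_nonneg _))
  have habs_bd : ∀ (ω : Ω) (t : ℝ), 0 ≤ t → t ≤ 1 →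
      |max (b ω - s ω) 0 * t| ≤ |s ω| + |b ω| := by
    intro ω t ht0 ht1
    rw [abs_mul]
    have h1 : |max (b ω - s ω) 0| * |t| ≤ |b ω - s ω| * 1 := by
      apply mul_le_mul _ (by rwa [abs_of_nonneg ht0]) (abs_nonneg _) (abs_nonneg _)
      rw [abs_of_nonneg (le_max_right _ _)]
      exact max_le (le_abs_self _) (abs_nonneg _)
    calc |max (b ω - s ω) 0| * |t| ≤ |b ω - s ω| * 1 := h1
      _ = |b ω - s ω| := mul_one _
      _ ≤ |b ω| + |s ω| := abs_sub _ _
      _ = |s ω| + |b ω| := add_comm _ _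
  have hHsb_int : Integrable (fun ω => max (b ω - s ω) 0 * (1 - btPsi ν (s ω) (b ω))) P := by
    refine Integrable.mono' (hsi.abs.add hbi.abs)
      ((((hbm.sub hsm).max measurable_const).mul
        (measurable_const.sub hψsb_meas)).aestronglyMeasurable) ?_
    filter_upwards with ω
    rw [Real.norm_eq_abs]
    exact habs_bd ω _ (by linarith [btPsi_le_one ν (s ω) (b ω)])
      (by linarith [btPsi_nonneg ν (s ω) (b ω)])
  have hW2_int : Integrable (fun ω => s ω + max (b ω - s ω) 0 * btPsi ν (s ω) (b ω)) P := by
    apply hsi.add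
    refine Integrable.mono' (hsi.abs.add hbi.abs)
      ((((hbm.sub hsm).max measurable_const).mul hψsb_meas).aestronglyMeasurable) ?_
    filter_upwards with ω
    rw [Real.norm_eq_abs]
    exact habs_bd ω _ (btPsi_nonneg ν (s ω) (b ω)) (btPsi_le_one ν (s ω) (b ω))
  -- step 1
  have hstep1 : ∫ ω, (s ω + max (b ω - s ω) 0 * btPsi ν (s ω) (b ω)) ∂P
      ≤ ∫ ω, (∫ x, f (ω, x) ∂btKappa) ∂P := by
    apply integral_mono hW2_int hfint.integral_prod_left
    intro ω
    dsimp only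
    rw [hinner ω]
    rcases le_or_gt (s ω) (b ω) with hsb | hbs
    · have hmx : max (b ω - s ω) 0 = b ω - s ω := max_eq_left (sub_nonneg.2 hsb)
      rw [hmx]
      have := mul_le_mul_of_nonneg_left (hπψ ω) (sub_nonneg.2 hsb)
      linarith
    · have hE0 : E ω = ∅ := by
        rw [Set.eq_empty_iff_forall_notMem]
        intro x hx
        exact absurd (le_trans hx.1 hx.2) (not_le.2 hbs)
      have hmx : max (b ω - s ω) 0 = 0 := max_eq_right (by linarith)
      rw [hmx, hE0]
      simp
  -- step 2
  have hstep2 : ∫ ω, (s ω + max (b ω - s ω) 0 * btPsi ν (s ω) (b ω)) ∂P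
      = (∫ ω, max (s ω) (b ω) ∂P)
        - ∫ ω, (max (b ω - s ω) 0 * (1 - btPsi ν (s ω) (b ω))) ∂P := by
    rw [← integral_sub hmax_int hHsb_int]
    apply integral_congr_ae
    filter_upwards with ω
    have hmaxid : max (s ω) (b ω) = s ω + max (b ω - s ω) 0 := by
      rcases le_total (s ω) (b ω) with h | h
      · rw [max_eq_right h, max_eq_left (sub_nonneg.2 h)]; ring
      · rw [max_eq_left h, max_eq_right (by linarith)]; ring
    rw [hmaxid]
    ring
  -- step 3 (independence)
  have ha0' : ∀ᵐ a ∂ν, 0 ≤ a := by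
    rw [hν]
    exact (ae_map_iff hsm.aemeasurable (measurableSet_Ici (a := (0:ℝ)))).2
      (Filter.Eventually.of_forall (fun ω => hs0 ω))
  have hb0' : ∀ᵐ c ∂μb, 0 ≤ c := by
    rw [hμb]
    exact (ae_map_iff hbm.aemeasurable (measurableSet_Ici (a := (0:ℝ)))).2
      (Filter.Eventually.of_forall (fun ω => hb0 ω))
  have hid' : Integrable (fun a : ℝ => a) ν := by
    have : Integrable id ν := by
      rw [hν]
      exact (integrable_map_measure aestronglyMeasurable_id hsm.aemeasurable).2 hsi
    exact this
  have hidb : Integrable (fun c : ℝ => c) μb := by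
    have : Integrable id μb := by
      rw [hμb]
      exact (integrable_map_measure aestronglyMeasurable_id hbm.aemeasurable).2 hbi
    exact this
  have hstep3 : ∫ ω, (max (b ω - s ω) 0 * (1 - btPsi ν (s ω) (b ω))) ∂P
      ≤ ee * ∫ ω, b ω ∂P := by
    set H : ℝ × ℝ → ℝ := fun z => max (z.2 - z.1) 0 * (1 - btPsi ν z.1 z.2) with hH
    have hHmeas : Measurable H := by
      apply ((measurable_snd.sub measurable_fst).max measurable_const).mul
      apply measurable_const.sub
      apply measurable_const.max
      exact ((Real.measurable_log.comp ((hGm.comp measurable_snd).max measurable_const)).sub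
        (Real.measurable_log.comp (((bt_F_measurable ν).comp measurable_fst).max
          measurable_const)))
    have hpair : AEMeasurable (fun ω => (s ω, b ω)) P := (hsm.prodMk hbm).aemeasurable
    have hmap : P.map (fun ω => (s ω, b ω)) = ν.prod μb :=
      (indepFun_iff_map_prod_eq_prod_map_map hsm.aemeasurable hbm.aemeasurable).1 hindep
    have hLHSeq : ∫ ω, (max (b ω - s ω) 0 * (1 - btPsi ν (s ω) (b ω))) ∂P
        = ∫ z, H z ∂(ν.prod μb) := by
      rw [← hmap, integral_map hpair hHmeas.aestronglyMeasurable]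
    have hHint : Integrable H (ν.prod μb) := by
      rw [← hmap, integrable_map_measure hHmeas.aestronglyMeasurable hpair]
      exact hHsb_int
    rw [hLHSeq, integral_prod_symm H hHint]
    calc ∫ c, ∫ a, H (a, c) ∂ν ∂μb ≤ ∫ c, c * ee ∂μb := by
          apply integral_mono_ae hHint.integral_prod_right (hidb.mul_const ee)
          filter_upwards [hb0'] with c hc
          exact bt_perC ν hA ha0' hid' hc
      _ = ee * ∫ ω, b ω ∂P := by
          rw [integral_mul_const]
          have hmb : ∫ c, id c ∂μb = ∫ ω, b ω ∂P := by
            rw [hμb, integral_map hbm.aemeasurable aestronglyMeasurable_id]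
            rfl
          have hmb' : ∫ c, (c : ℝ) ∂μb = ∫ ω, b ω ∂P := hmb
          rw [hmb', mul_comm]
  -- step 4
  have hstep4 : ∫ ω, b ω ∂P ≤ ∫ ω, max (s ω) (b ω) ∂P :=
    integral_mono hbi hmax_int (fun ω => le_max_right _ _)
  -- assemble
  set g : ℝ → ℝ := fun x => ∫ ω, f (ω, x) ∂P with hgdef
  have hgint : Integrable g btKappa := hfint.integral_prod_right
  have hswap : ∫ ω, (∫ x, f (ω, x) ∂btKappa) ∂P = ∫ x, g x ∂btKappa :=
    integral_integral_swap hfint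
  have hgeT : T ≤ ∫ x, g x ∂btKappa := by
    have h4 : ee * ∫ ω, b ω ∂P ≤ ee * ∫ ω, max (s ω) (b ω) ∂P :=
      mul_le_mul_of_nonneg_left hstep4 bt_e1_pos.le
    calc T = (∫ ω, max (s ω) (b ω) ∂P) - ee * ∫ ω, max (s ω) (b ω) ∂P := by
          rw [hT]; ring
      _ ≤ (∫ ω, max (s ω) (b ω) ∂P) - ee * ∫ ω, b ω ∂P := by linarith
      _ ≤ (∫ ω, max (s ω) (b ω) ∂P)
            - ∫ ω, (max (b ω - s ω) 0 * (1 - btPsi ν (s ω) (b ω))) ∂P := by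
          linarith [hstep3]
      _ = ∫ ω, (s ω + max (b ω - s ω) 0 * btPsi ν (s ω) (b ω)) ∂P := hstep2.symm
      _ ≤ ∫ ω, (∫ x, f (ω, x) ∂btKappa) ∂P := hstep1
      _ = ∫ x, g x ∂btKappa := hswap
  have hlt : ∀ x : ℝ, g x < T := fun x => hcon (q x)
  have hnn : ∀ x : ℝ, 0 ≤ T - g x := fun x => by linarith [hlt x]
  have hTg_int : Integrable (fun x => T - g x) btKappa := (integrable_const T).sub hgint
  have h0 : ∫ x, (T - g x) ∂btKappa = 0 := by
    apply le_antisymm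
    · rw [integral_sub (integrable_const T) hgint]
      have hTc : ∫ (_ : ℝ), T ∂btKappa = T := by simp [measure_univ]
      linarith [hgeT, hTc]
    · exact integral_nonneg hnn
  have hae := (integral_eq_zero_iff_of_nonneg hnn hTg_int).1 h0
  have hFalse : ∀ᵐ x ∂btKappa, False := by
    filter_upwards [hae] with x hx
    have hx' : T - g x = 0 := hx
    linarith [hlt x]
  have h1 : btKappa {x : ℝ | ¬False} = 0 := ae_iff.1 hFalse
  simp only [not_false_iff, Set.setOf_true, measure_univ] at h1
  exact one_ne_zero h1
end BilateralTradeAux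
end

section
/- Let n ≥ 3, let v₁, …, vₙ be nonnegative reals, fix an index i, and let p ∈ ℝ be a price. Let m₁ = max_{k ≠ i} v_k, let j be an index (≠ i) attaining this maximum, let m₂ = max_{k ∉ {i, j}} v_k be the second-highest value among the agents other than i, and let p* = max(p, m₂). Then the welfare of trading i's item at price p* to the highest other bidder is at least the welfare of the bilateral trade at price p against a buyer with value m₁: (if v_i ≤ p* ∧ p* ≤ m₁ then m₁ else v_i) ≥ (if v_i ≤ p ∧ p ≤ m₁ then m₁ else v_i). -/
open MeasureTheory ProbabilityTheory

/-- **Second-price auction with reserve dominates the bilateral trade.**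
Let `n ≥ 3`, `v` nonnegative values, `i` a fixed index, `p` a price. Let
`m₁ = max_{k ≠ i} v k`, `j ≠ i` an index attaining this maximum,
`m₂ = max_{k ∉ {i,j}} v k` and `p* = max p m₂`. Then the welfare of trading
`i`'s item at price `p*` to the highest other bidder is at least the welfare
of the bilateral trade at price `p` against a buyer of value `m₁`. -/
theorem second_price_with_reserve_dominates
    (n : ℕ) (hn : 3 ≤ n) (v : Fin n → ℝ) (hv0 : ∀ k, 0 ≤ v k)
    (i j : Fin n) (p : ℝ) (hji : j ≠ i)
    (hj : v j = ⨆ k : {k : Fin n // k ≠ i}, v k) :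
    (if v i ≤ max p (⨆ k : {k : Fin n // k ≠ i ∧ k ≠ j}, v k)
        ∧ max p (⨆ k : {k : Fin n // k ≠ i ∧ k ≠ j}, v k)
            ≤ ⨆ k : {k : Fin n // k ≠ i}, v k
      then ⨆ k : {k : Fin n // k ≠ i}, v k else v i)
    ≥ (if v i ≤ p ∧ p ≤ ⨆ k : {k : Fin n // k ≠ i}, v k
      then ⨆ k : {k : Fin n // k ≠ i}, v k else v i) := by
  set m₁ := ⨆ k : {k : Fin n // k ≠ i}, v k with hm1
  set m₂ := ⨆ k : {k : Fin n // k ≠ i ∧ k ≠ j}, v k with hm2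
  -- nonempty index type for m₂
  have hne2 : Nonempty {k : Fin n // k ≠ i ∧ k ≠ j} := by
    have : ∃ k : Fin n, k ≠ i ∧ k ≠ j := by
      by_contra h
      push_neg at h
      have hcard : (Finset.univ : Finset (Fin n)).card ≤ ({i, j} : Finset (Fin n)).card := by
        apply Finset.card_le_card
        intro k _
        rcases eq_or_ne k i with rfl | hk
        · simp
        · simp [h k hk]
      have h2 : ({i, j} : Finset (Fin n)).card ≤ 2 := by
        apply le_trans (Finset.card_insert_le _ _); simp
      have : n ≤ 2 := by simpa using hcard.trans h2
      omega
    exact ⟨⟨this.choose, this.choose_spec⟩⟩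
  have hm2le : m₂ ≤ m₁ := by
    apply ciSup_le
    intro ⟨k, hk1, hk2⟩
    exact le_ciSup (f := fun k : {k : Fin n // k ≠ i} => v (k : Fin n))
      (Set.Finite.bddAbove (Set.finite_range _)) ⟨k, hk1⟩
  by_cases h : v i ≤ p ∧ p ≤ m₁
  · have h1 : v i ≤ max p m₂ := le_trans h.1 (le_max_left _ _)
    have h2 : max p m₂ ≤ m₁ := max_le h.2 hm2le
    simp [h, h1, h2]
  · simp only [h, if_false]
    by_cases h' : v i ≤ max p m₂ ∧ max p m₂ ≤ m₁
    · simp only [h', if_true]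
      exact le_trans h'.1 h'.2
    · rw [if_neg h']
end

section
/- Let (Ω, P) be a probability space and let v_s, v_b : Ω × [0,1] → ℝ be measurable, with v_s(ω, ·) and v_b(ω, ·) nonnegative and nondecreasing on [0,1] for each ω, and with all relevant quantities integrable. Let s = v_s(·, 1) and b = v_b(·, 1), and let α ∈ (0, 1]. Suppose a price p ∈ ℝ satisfies E[s + (b − s)·𝟙{s ≤ p ∧ p ≤ b}] ≥ α·E[max(s, b)]. Then E[s + (b − s)·𝟙{s ≤ p ∧ p ≤ b}] ≥ (α/(α+1)) · E[sup_{x ∈ [0,1]} (v_s(1 − x) + v_b(x))]. -/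
open MeasureTheory ProbabilityTheory

/-- **Divisible good with monotone valuations: α/(α+1)-approximation.**
The seller initially owns a divisible good; `vs ω` and `vb ω` are nonnegative
nondecreasing valuations on `[0,1]`. If the price `p` is an `α`-approximation
for the induced indivisible bilateral trade instance with `s = vs(·,1)` and
`b = vb(·,1)`, then trading the whole good at price `p` achieves at least an
`α/(α+1)` fraction of the optimal divisible efficiency
`E[sup_{x ∈ [0,1]} (vs(1-x) + vb(x))]`. -/
theorem divisible_monotone_reduction
    {Ω : Type*} [MeasurableSpace Ω] {P : Measure Ω} [IsProbabilityMeasure P]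
    (vs vb : Ω → ℝ → ℝ)
    (hvsm : Measurable (fun q : Ω × ℝ => vs q.1 q.2))
    (hvbm : Measurable (fun q : Ω × ℝ => vb q.1 q.2))
    (hvs0 : ∀ ω, ∀ x ∈ Set.Icc (0:ℝ) 1, 0 ≤ vs ω x)
    (hvb0 : ∀ ω, ∀ x ∈ Set.Icc (0:ℝ) 1, 0 ≤ vb ω x)
    (hvsmono : ∀ ω, MonotoneOn (vs ω) (Set.Icc (0:ℝ) 1))
    (hvbmono : ∀ ω, MonotoneOn (vb ω) (Set.Icc (0:ℝ) 1))
    (hsi : Integrable (fun ω => vs ω 1) P)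
    (hbi : Integrable (fun ω => vb ω 1) P)
    (hopti : Integrable
      (fun ω => ⨆ x : Set.Icc (0:ℝ) 1, (vs ω (1 - (x:ℝ)) + vb ω (x:ℝ))) P)
    (α : ℝ) (hα0 : 0 < α) (hα1 : α ≤ 1) (p : ℝ)
    (hp : ∫ ω, (vs ω 1 + (vb ω 1 - vs ω 1) *
            (if vs ω 1 ≤ p ∧ p ≤ vb ω 1 then (1:ℝ) else 0)) ∂P
          ≥ α * ∫ ω, max (vs ω 1) (vb ω 1) ∂P) :
    ∫ ω, (vs ω 1 + (vb ω 1 - vs ω 1) *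
            (if vs ω 1 ≤ p ∧ p ≤ vb ω 1 then (1:ℝ) else 0)) ∂P
      ≥ (α / (α + 1)) *
          ∫ ω, ⨆ x : Set.Icc (0:ℝ) 1, (vs ω (1 - (x:ℝ)) + vb ω (x:ℝ)) ∂P := by
  classical
  set s : Ω → ℝ := fun ω => vs ω 1 with hs
  set b : Ω → ℝ := fun ω => vb ω 1 with hb
  have hsm : Measurable s := hvsm.comp (measurable_id.prodMk measurable_const)
  have hbm : Measurable b := hvbm.comp (measurable_id.prodMk measurable_const)
  set W : ℝ := ∫ ω, (s ω + (b ω - s ω) * (if s ω ≤ p ∧ p ≤ b ω then (1:ℝ) else 0)) ∂P with hW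
  -- integrability of trade welfare
  have hE : MeasurableSet {ω | s ω ≤ p ∧ p ≤ b ω} :=
    (measurableSet_le hsm measurable_const).inter (measurableSet_le measurable_const hbm)
  have hind : (fun ω => (b ω - s ω) * (if s ω ≤ p ∧ p ≤ b ω then (1:ℝ) else 0))
      = Set.indicator {ω | s ω ≤ p ∧ p ≤ b ω} (fun ω => b ω - s ω) := by
    funext ω
    by_cases h : s ω ≤ p ∧ p ≤ b ω <;>
      simp [Set.indicator, h]
  have hWi : Integrable (fun ω => s ω + (b ω - s ω) * (if s ω ≤ p ∧ p ≤ b ω then (1:ℝ) else 0)) P := by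
    rw [show (fun ω => s ω + (b ω - s ω) * (if s ω ≤ p ∧ p ≤ b ω then (1:ℝ) else 0))
        = (fun ω => s ω + Set.indicator {ω | s ω ≤ p ∧ p ≤ b ω} (fun ω => b ω - s ω) ω) by
      rw [← hind]]
    exact hsi.add ((hbi.sub hsi).indicator hE)
  -- W ≥ ∫ s
  have h1 : W ≥ ∫ ω, s ω ∂P := by
    refine integral_mono hsi hWi fun ω => ?_
    by_cases h : s ω ≤ p ∧ p ≤ b ω
    · rw [if_pos h]
      nlinarith [h.1, h.2]
    · simp [h]
  -- ∫ max ≥ ∫ b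
  have hmaxi : Integrable (fun ω => max (s ω) (b ω)) P := hsi.sup hbi
  have h2 : (∫ ω, max (s ω) (b ω) ∂P) ≥ ∫ ω, b ω ∂P :=
    integral_mono hbi hmaxi fun ω => le_max_right _ _
  have h2' : W ≥ α * ∫ ω, b ω ∂P := le_trans (by nlinarith) hp
  -- pointwise bound on OPT
  have hopt_le : ∀ ω, (⨆ x : Set.Icc (0:ℝ) 1, (vs ω (1 - (x:ℝ)) + vb ω (x:ℝ))) ≤ s ω + b ω := by
    intro ω
    haveI : Nonempty (Set.Icc (0:ℝ) 1) := ⟨⟨0, by norm_num⟩⟩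
    refine ciSup_le fun x => ?_
    have hx : (x:ℝ) ∈ Set.Icc (0:ℝ) 1 := x.2
    have h1x : (1 - (x:ℝ)) ∈ Set.Icc (0:ℝ) 1 := ⟨by linarith [hx.1, hx.2], by linarith [hx.1]⟩
    have h1' : (1:ℝ) ∈ Set.Icc (0:ℝ) 1 := by norm_num
    have := hvsmono ω h1x h1' (by linarith [hx.1] : (1 - (x:ℝ)) ≤ 1)
    have := hvbmono ω hx h1' hx.2
    simp only [hs, hb]
    linarith
  have h3 : (∫ ω, ⨆ x : Set.Icc (0:ℝ) 1, (vs ω (1 - (x:ℝ)) + vb ω (x:ℝ)) ∂P)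
      ≤ (∫ ω, s ω ∂P) + ∫ ω, b ω ∂P := by
    rw [← integral_add hsi hbi]
    exact integral_mono hopti (hsi.add hbi) hopt_le
  -- conclude
  rw [ge_iff_le, div_mul_eq_mul_div, div_le_iff₀ (by linarith : (0:ℝ) < α + 1)]
  nlinarith [h1, h2', h3, hα0.le]
end

section
/- Let (Ω, P) be a probability space and let v₁, v₂ : Ω × [0,1] → ℝ be measurable, with v₁(ω, ·) and v₂(ω, ·) nonnegative, nondecreasing, concave on [0,1] and satisfying vᵢ(ω, 0) = 0 for each ω, with all relevant quantities integrable. Let α ∈ (0, 1], set x₀ = α/(α+1), and define s' = v₁(·, 1) − v₁(·, x₀) and b' = v₂(·, 1 − x₀). Suppose a price p ∈ ℝ satisfies E[s' + (b' − s')·𝟙{s' ≤ p ∧ p ≤ b'}] ≥ α·E[max(s', b')]. Then the mechanism that first gives fraction x₀ to player 1 and then trades the remaining 1 − x₀ at price p achieves E[v₁(·, x₀) + s' + (b' − s')·𝟙{s' ≤ p ∧ p ≤ b'}] ≥ (α/(α+1)) · E[sup_{y ∈ [0,1]} (v₁(y) + v₂(1 − y))]. -/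
open MeasureTheory ProbabilityTheory

/-- **Divisible good with concave valuations: α/(α+1)-approximation.**
Each player `i` has a normalized, nonnegative, nondecreasing and concave
valuation `vᵢ ω` on `[0,1]`. With `x₀ = α/(α+1)`, `s' = v₁(1) − v₁(x₀)`,
`b' = v₂(1 − x₀)`, if the price `p` is an `α`-approximation for the induced
indivisible bilateral trade instance `(s', b')`, then giving player 1 the
fraction `x₀` for free and trading the remaining `1 − x₀` at price `p`
achieves an `α/(α+1)` fraction of the optimal divisible efficiency. -/
theorem divisible_concave_reduction
    {Ω : Type*} [MeasurableSpace Ω] {P : Measure Ω} [IsProbabilityMeasure P]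
    (v₁ v₂ : Ω → ℝ → ℝ)
    (hv1m : Measurable (fun q : Ω × ℝ => v₁ q.1 q.2))
    (hv2m : Measurable (fun q : Ω × ℝ => v₂ q.1 q.2))
    (hv10 : ∀ ω, ∀ x ∈ Set.Icc (0:ℝ) 1, 0 ≤ v₁ ω x)
    (hv20 : ∀ ω, ∀ x ∈ Set.Icc (0:ℝ) 1, 0 ≤ v₂ ω x)
    (hv1mono : ∀ ω, MonotoneOn (v₁ ω) (Set.Icc (0:ℝ) 1))
    (hv2mono : ∀ ω, MonotoneOn (v₂ ω) (Set.Icc (0:ℝ) 1))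
    (hv1conc : ∀ ω, ConcaveOn ℝ (Set.Icc (0:ℝ) 1) (v₁ ω))
    (hv2conc : ∀ ω, ConcaveOn ℝ (Set.Icc (0:ℝ) 1) (v₂ ω))
    (hv1zero : ∀ ω, v₁ ω 0 = 0) (hv2zero : ∀ ω, v₂ ω 0 = 0)
    (h1i : Integrable (fun ω => v₁ ω 1) P)
    (h2i : Integrable (fun ω => v₂ ω 1) P)
    (hopti : Integrable
      (fun ω => ⨆ y : Set.Icc (0:ℝ) 1, (v₁ ω (y:ℝ) + v₂ ω (1 - (y:ℝ)))) P)
    (α : ℝ) (hα0 : 0 < α) (hα1 : α ≤ 1) (p : ℝ)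
    (hp : ∫ ω, ((v₁ ω 1 - v₁ ω (α / (α + 1)))
            + (v₂ ω (1 - α / (α + 1)) - (v₁ ω 1 - v₁ ω (α / (α + 1)))) *
              (if v₁ ω 1 - v₁ ω (α / (α + 1)) ≤ p ∧ p ≤ v₂ ω (1 - α / (α + 1))
                then (1:ℝ) else 0)) ∂P
          ≥ α * ∫ ω, max (v₁ ω 1 - v₁ ω (α / (α + 1))) (v₂ ω (1 - α / (α + 1))) ∂P) :
    ∫ ω, (v₁ ω (α / (α + 1)) + (v₁ ω 1 - v₁ ω (α / (α + 1)))
            + (v₂ ω (1 - α / (α + 1)) - (v₁ ω 1 - v₁ ω (α / (α + 1)))) *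
              (if v₁ ω 1 - v₁ ω (α / (α + 1)) ≤ p ∧ p ≤ v₂ ω (1 - α / (α + 1))
                then (1:ℝ) else 0)) ∂P
      ≥ (α / (α + 1)) *
          ∫ ω, ⨆ y : Set.Icc (0:ℝ) 1, (v₁ ω (y:ℝ) + v₂ ω (1 - (y:ℝ))) ∂P := by

  have hα1' : (0:ℝ) < α + 1 := by linarith
  have hx0pos : 0 < α / (α + 1) := div_pos hα0 hα1'
  have hx0lt : α / (α + 1) < 1 := by rw [div_lt_one hα1']; linarith
  have hx0mem : α / (α + 1) ∈ Set.Icc (0:ℝ) 1 := ⟨hx0pos.le, hx0lt.le⟩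
  have h1mem : (1:ℝ) ∈ Set.Icc (0:ℝ) 1 := ⟨zero_le_one, le_refl 1⟩
  have h0mem : (0:ℝ) ∈ Set.Icc (0:ℝ) 1 := ⟨le_refl 0, zero_le_one⟩
  have hcmem : 1 - α / (α + 1) ∈ Set.Icc (0:ℝ) 1 := ⟨by linarith, by linarith⟩
  -- measurability of slices
  have mv1 : ∀ c : ℝ, Measurable (fun ω => v₁ ω c) := fun c =>
    hv1m.comp (measurable_id.prodMk measurable_const)
  have mv2 : ∀ c : ℝ, Measurable (fun ω => v₂ ω c) := fun c =>
    hv2m.comp (measurable_id.prodMk measurable_const)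
  -- integrability
  have hint1 : Integrable (fun ω => v₁ ω (α / (α + 1))) P := by
    refine h1i.mono ((mv1 (α / (α + 1))).aestronglyMeasurable) (ae_of_all _ fun ω => ?_)
    rw [Real.norm_eq_abs, Real.norm_eq_abs,
        abs_of_nonneg (hv10 ω _ hx0mem), abs_of_nonneg (hv10 ω 1 h1mem)]
    exact hv1mono ω hx0mem h1mem hx0lt.le
  have hintb : Integrable (fun ω => v₂ ω (1 - α / (α + 1))) P := by
    refine h2i.mono ((mv2 (1 - α / (α + 1))).aestronglyMeasurable) (ae_of_all _ fun ω => ?_)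
    rw [Real.norm_eq_abs, Real.norm_eq_abs,
        abs_of_nonneg (hv20 ω _ hcmem), abs_of_nonneg (hv20 ω 1 h1mem)]
    exact hv2mono ω hcmem h1mem (by linarith)
  have hints : Integrable (fun ω => v₁ ω 1 - v₁ ω (α / (α + 1))) P := h1i.sub hint1
  have hsm : Measurable (fun ω => v₁ ω 1 - v₁ ω (α / (α + 1))) :=
    (mv1 1).sub (mv1 (α / (α + 1)))
  have hbm : Measurable (fun ω => v₂ ω (1 - α / (α + 1))) := mv2 _
  have hintmax : Integrable
      (fun ω => max (v₁ ω 1 - v₁ ω (α / (α + 1))) (v₂ ω (1 - α / (α + 1)))) P := by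
    have h1 := hints.add hintb
    have h2 := (hints.sub hintb).abs
    have h3 := (h1.add h2).div_const 2
    refine h3.congr (ae_of_all _ fun ω => ?_)
    simp only [Pi.add_apply, Pi.sub_apply]
    rcases le_total (v₁ ω 1 - v₁ ω (α / (α + 1))) (v₂ ω (1 - α / (α + 1))) with h | h
    · rw [max_eq_right h, abs_of_nonpos (by linarith)]; ring
    · rw [max_eq_left h, abs_of_nonneg (by linarith)]; ring
  have hA : MeasurableSet {ω | v₁ ω 1 - v₁ ω (α / (α + 1)) ≤ p ∧
      p ≤ v₂ ω (1 - α / (α + 1))} := by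
    rw [Set.setOf_and]
    exact (measurableSet_le hsm measurable_const).inter
      (measurableSet_le measurable_const hbm)
  have hintind : Integrable (fun ω =>
      (v₂ ω (1 - α / (α + 1)) - (v₁ ω 1 - v₁ ω (α / (α + 1)))) *
        (if v₁ ω 1 - v₁ ω (α / (α + 1)) ≤ p ∧ p ≤ v₂ ω (1 - α / (α + 1))
          then (1:ℝ) else 0)) P := by
    have := (hintb.sub hints).indicator hA
    refine this.congr (ae_of_all _ fun ω => ?_)
    rw [Set.indicator_apply]
    simp only [Set.mem_setOf_eq]
    by_cases h : v₁ ω 1 - v₁ ω (α / (α + 1)) ≤ p ∧ p ≤ v₂ ω (1 - α / (α + 1))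
    · rw [if_pos h, if_pos h, mul_one, Pi.sub_apply]
    · rw [if_neg h, if_neg h, mul_zero]
  have hintG : Integrable (fun ω =>
      (v₁ ω 1 - v₁ ω (α / (α + 1)))
        + (v₂ ω (1 - α / (α + 1)) - (v₁ ω 1 - v₁ ω (α / (α + 1)))) *
          (if v₁ ω 1 - v₁ ω (α / (α + 1)) ≤ p ∧ p ≤ v₂ ω (1 - α / (α + 1))
            then (1:ℝ) else 0)) P := hints.add hintind
  -- pointwise key inequality
  have key : ∀ ω, (α / (α + 1)) *
      (⨆ y : Set.Icc (0:ℝ) 1, (v₁ ω (y:ℝ) + v₂ ω (1 - (y:ℝ))))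
      ≤ v₁ ω (α / (α + 1)) +
        α * max (v₁ ω 1 - v₁ ω (α / (α + 1))) (v₂ ω (1 - α / (α + 1))) := by
    intro ω
    haveI : Nonempty (Set.Icc (0:ℝ) 1) := ⟨⟨0, h0mem⟩⟩
    set M : ℝ := v₁ ω (α / (α + 1)) +
        α * max (v₁ ω 1 - v₁ ω (α / (α + 1))) (v₂ ω (1 - α / (α + 1))) with hM
    have hbound : ∀ y : Set.Icc (0:ℝ) 1,
        v₁ ω (y:ℝ) + v₂ ω (1 - (y:ℝ)) ≤ M / (α / (α + 1)) := by
      rintro ⟨y, hy0, hy1⟩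
      rw [le_div_iff₀ hx0pos]
      have hymem : y ∈ Set.Icc (0:ℝ) 1 := ⟨hy0, hy1⟩
      have hcymem : 1 - y ∈ Set.Icc (0:ℝ) 1 := ⟨by linarith, by linarith⟩
      -- part A
      have hA1 : (α / (α + 1)) * v₁ ω y ≤ v₁ ω ((α / (α + 1)) * y) := by
        have := (hv1conc ω).2 hymem h0mem hx0pos.le
          (by linarith : (0:ℝ) ≤ 1 - α / (α + 1)) (by ring)
        simpa [smul_eq_mul, hv1zero ω] using this
      have hA2 : v₁ ω ((α / (α + 1)) * y) ≤ v₁ ω (α / (α + 1)) := by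
        refine hv1mono ω ⟨mul_nonneg hx0pos.le hy0, ?_⟩ hx0mem ?_
        · nlinarith
        · nlinarith
      -- part B
      have ht : 1 - α / (α + 1) = 1 / (α + 1) := by field_simp; ring
      have hB1 : (1 - α / (α + 1)) * v₂ ω (1 - y) ≤
          v₂ ω ((1 - α / (α + 1)) * (1 - y)) := by
        have := (hv2conc ω).2 hcymem h0mem
          (by linarith : (0:ℝ) ≤ 1 - α / (α + 1)) hx0pos.le (by ring)
        simpa [smul_eq_mul, hv2zero ω] using this
      have hB2 : v₂ ω ((1 - α / (α + 1)) * (1 - y)) ≤ v₂ ω (1 - α / (α + 1)) := by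
        refine hv2mono ω ⟨mul_nonneg (by linarith) (by linarith), ?_⟩ hcmem ?_
        · nlinarith
        · nlinarith
      have hmaxb : v₂ ω (1 - α / (α + 1)) ≤
          max (v₁ ω 1 - v₁ ω (α / (α + 1))) (v₂ ω (1 - α / (α + 1))) :=
        le_max_right _ _
      have hBB : (α / (α + 1)) * v₂ ω (1 - y) ≤
          α * max (v₁ ω 1 - v₁ ω (α / (α + 1))) (v₂ ω (1 - α / (α + 1))) := by
        calc (α / (α + 1)) * v₂ ω (1 - y)
            = α * ((1 - α / (α + 1)) * v₂ ω (1 - y)) := by field_simp; ring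
          _ ≤ α * v₂ ω ((1 - α / (α + 1)) * (1 - y)) :=
              mul_le_mul_of_nonneg_left hB1 hα0.le
          _ ≤ α * v₂ ω (1 - α / (α + 1)) := mul_le_mul_of_nonneg_left hB2 hα0.le
          _ ≤ α * max (v₁ ω 1 - v₁ ω (α / (α + 1))) (v₂ ω (1 - α / (α + 1))) :=
              mul_le_mul_of_nonneg_left hmaxb hα0.le
      rw [hM]
      nlinarith [hA1, hA2, hBB]
    have hsup : (⨆ y : Set.Icc (0:ℝ) 1, (v₁ ω (y:ℝ) + v₂ ω (1 - (y:ℝ))))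
        ≤ M / (α / (α + 1)) := ciSup_le hbound
    calc (α / (α + 1)) * (⨆ y : Set.Icc (0:ℝ) 1, (v₁ ω (y:ℝ) + v₂ ω (1 - (y:ℝ))))
        ≤ (α / (α + 1)) * (M / (α / (α + 1))) :=
          mul_le_mul_of_nonneg_left hsup hx0pos.le
      _ = M := by field_simp
  -- integrate
  have hmono : ∫ ω, (α / (α + 1)) *
        (⨆ y : Set.Icc (0:ℝ) 1, (v₁ ω (y:ℝ) + v₂ ω (1 - (y:ℝ)))) ∂P
      ≤ ∫ ω, (v₁ ω (α / (α + 1)) +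
          α * max (v₁ ω 1 - v₁ ω (α / (α + 1))) (v₂ ω (1 - α / (α + 1)))) ∂P :=
    integral_mono (hopti.const_mul (α / (α + 1)))
      (hint1.add (hintmax.const_mul α)) key
  rw [integral_const_mul, integral_add hint1 (hintmax.const_mul α),
    integral_const_mul] at hmono
  have hsplit : ∫ ω, (v₁ ω (α / (α + 1)) + (v₁ ω 1 - v₁ ω (α / (α + 1)))
            + (v₂ ω (1 - α / (α + 1)) - (v₁ ω 1 - v₁ ω (α / (α + 1)))) *
              (if v₁ ω 1 - v₁ ω (α / (α + 1)) ≤ p ∧ p ≤ v₂ ω (1 - α / (α + 1))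
                then (1:ℝ) else 0)) ∂P
      = ∫ ω, v₁ ω (α / (α + 1)) ∂P
        + ∫ ω, ((v₁ ω 1 - v₁ ω (α / (α + 1)))
            + (v₂ ω (1 - α / (α + 1)) - (v₁ ω 1 - v₁ ω (α / (α + 1)))) *
              (if v₁ ω 1 - v₁ ω (α / (α + 1)) ≤ p ∧ p ≤ v₂ ω (1 - α / (α + 1))
                then (1:ℝ) else 0)) ∂P := by
    rw [← integral_add hint1 hintG]
    congr 1; funext ω; ring
  rw [hsplit]
  linarith [hp, hmono]
end

section
/- Let t > 2 and λ = 1/(1 − e^{−t}), and let s and b be independent random variables on [0, t] with densities f_s(x) = λ·e^{x−t} and f_b(x) = λ·e^{−x} respectively. Then for every price p ∈ ℝ: E[(b − s)·𝟙{s ≤ p ∧ p ≤ b}] ≤ [(2 + (t + 2)·e^{−t}) / (t − 2 + (t + 2)·e^{−t})] · E[max(b − s, 0)]. In particular, every fixed-price mechanism achieves at most an O(1/t) fraction of the optimal gain from trade, so no fixed-price (dominant-strategy) mechanism guarantees a constant approximation to the optimal gain from trade. -/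
open MeasureTheory ProbabilityTheory
open scoped ENNReal NNReal

section helpers

lemma aux_inner (x a b : ℝ) :
    ∫ y in a..b, (y - x) * Real.exp (-y) =
      (a - x + 1) * Real.exp (-a) - (b - x + 1) * Real.exp (-b) := by
  have h : ∀ y : ℝ, HasDerivAt (fun y => -((y - x + 1) * Real.exp (-y)))
      ((y - x) * Real.exp (-y)) y := by
    intro y
    have he : HasDerivAt (fun y : ℝ => Real.exp (-y)) (-Real.exp (-y)) y := by
      simpa using (hasDerivAt_neg y).exp
    have h1 : HasDerivAt (fun y : ℝ => y - x + 1) 1 y := by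
      simpa using ((hasDerivAt_id y).sub_const x).add_const 1
    have := (h1.mul he).neg
    exact this.congr_deriv (by ring)
  have := intervalIntegral.integral_eq_sub_of_hasDerivAt
    (f := fun y => -((y - x + 1) * Real.exp (-y)))
    (fun y _ => h y) (Continuous.intervalIntegrable (by continuity) a b)
  rw [this]; ring

lemma aux_outer (q a b : ℝ) :
    ∫ x in a..b, (q - x + 1) * Real.exp x =
      (q - b + 2) * Real.exp b - (q - a + 2) * Real.exp a := by
  have h : ∀ x : ℝ, HasDerivAt (fun x => (q - x + 2) * Real.exp x)
      ((q - x + 1) * Real.exp x) x := by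
    intro x
    have h1 : HasDerivAt (fun x : ℝ => q - x + 2) (-1) x := by
      simpa using ((hasDerivAt_id x).const_sub q).add_const 2
    have := h1.mul (Real.hasDerivAt_exp x)
    exact this.congr_deriv (by ring)
  rw [intervalIntegral.integral_eq_sub_of_hasDerivAt (fun x _ => h x)
    (Continuous.intervalIntegrable (by continuity) a b)]

lemma aux_inner_seg (p t x : ℝ) (hpt : p ≤ t) :
    ∫ y in Set.Icc p t, Real.exp (-y) * (y - x) =
      (p - x + 1) * Real.exp (-p) - (t - x + 1) * Real.exp (-t) := by
  rw [MeasureTheory.integral_Icc_eq_integral_Ioc, ← intervalIntegral.integral_of_le hpt]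
  rw [show (fun y => Real.exp (-y) * (y - x)) = fun y => (y - x) * Real.exp (-y) by
    funext y; ring]
  exact aux_inner x p t

lemma aux_inner_rhs (t x : ℝ) (h0x : 0 ≤ x) (hxt : x ≤ t) :
    ∫ y in Set.Icc (0:ℝ) t, Real.exp (-y) * max (y - x) 0 =
      Real.exp (-x) - (t - x + 1) * Real.exp (-t) := by
  rw [MeasureTheory.integral_Icc_eq_integral_Ioc,
    ← intervalIntegral.integral_of_le (le_trans h0x hxt)]
  rw [← intervalIntegral.integral_add_adjacent_intervals
    (Continuous.intervalIntegrable (by continuity) 0 x)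
    (Continuous.intervalIntegrable (by continuity) x t)]
  have e1 : ∫ y in (0:ℝ)..x, Real.exp (-y) * max (y - x) 0 = 0 := by
    rw [intervalIntegral.integral_congr (g := fun _ => 0) ?_, intervalIntegral.integral_zero]
    intro y hy
    rw [Set.uIcc_of_le h0x] at hy
    simp [max_eq_right (by linarith [hy.2] : y - x ≤ 0)]
  have e2 : ∫ y in x..t, Real.exp (-y) * max (y - x) 0 =
      Real.exp (-x) - (t - x + 1) * Real.exp (-t) := by
    rw [intervalIntegral.integral_congr (g := fun y => (y - x) * Real.exp (-y)) ?_, aux_inner]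
    · ring_nf
    · intro y hy
      rw [Set.uIcc_of_le hxt] at hy
      simp only
      rw [max_eq_left (by linarith [hy.1] : (0:ℝ) ≤ y - x)]
      ring
  rw [e1, e2]; ring

lemma aux_calc_rhs (t : ℝ) :
    ∫ x in (0:ℝ)..t, Real.exp (x - t) * (Real.exp (-x) - (t - x + 1) * Real.exp (-t)) =
      Real.exp (-t) * (t - 2 + (t + 2) * Real.exp (-t)) := by
  have key : ∀ x : ℝ, Real.exp (x - t) * (Real.exp (-x) - (t - x + 1) * Real.exp (-t)) =
      Real.exp (-t) - (Real.exp (-t) * Real.exp (-t)) * ((t - x + 1) * Real.exp x) := by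
    intro x
    have h1 : Real.exp (x - t) * Real.exp (-x) = Real.exp (-t) := by
      rw [← Real.exp_add]; ring_nf
    have h2 : Real.exp (x - t) = Real.exp x * Real.exp (-t) := by
      rw [← Real.exp_add]; ring_nf
    calc Real.exp (x - t) * (Real.exp (-x) - (t - x + 1) * Real.exp (-t))
        = Real.exp (x - t) * Real.exp (-x)
            - (Real.exp (-t) * Real.exp (-t)) * ((t - x + 1) * Real.exp x) := by
          rw [h2]; ring
      _ = _ := by rw [h1]
  rw [intervalIntegral.integral_congr (fun x _ => key x)]
  rw [intervalIntegral.integral_sub (Continuous.intervalIntegrable (by continuity) 0 t)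
    (Continuous.intervalIntegrable (by continuity) 0 t),
    intervalIntegral.integral_const, intervalIntegral.integral_const_mul, aux_outer]
  have het : Real.exp (-t) * Real.exp t = 1 := by rw [← Real.exp_add]; simp
  have : Real.exp (-t) * Real.exp (-t) * ((t - t + 2) * Real.exp t - (t - 0 + 2) * Real.exp 0)
      = 2 * Real.exp (-t) - (t + 2) * (Real.exp (-t) * Real.exp (-t)) := by
    simp only [Real.exp_zero]
    linear_combination (2 * Real.exp (-t)) * het
  rw [this]
  simp only [smul_eq_mul, sub_zero]
  ring

lemma aux_calc_lhs (p t : ℝ) :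
    ∫ x in (0:ℝ)..p, Real.exp (x - t) *
        ((p - x + 1) * Real.exp (-p) - (t - x + 1) * Real.exp (-t)) =
      Real.exp (-t) * (2 - (p + 2) * Real.exp (-p) + (t + 2) * Real.exp (-t)
        - (t - p + 2) * Real.exp p * Real.exp (-t)) := by
  have key : ∀ x : ℝ, Real.exp (x - t) *
        ((p - x + 1) * Real.exp (-p) - (t - x + 1) * Real.exp (-t)) =
      (Real.exp (-t) * Real.exp (-p)) * ((p - x + 1) * Real.exp x)
        - (Real.exp (-t) * Real.exp (-t)) * ((t - x + 1) * Real.exp x) := by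
    intro x
    have h2 : Real.exp (x - t) = Real.exp x * Real.exp (-t) := by
      rw [← Real.exp_add]; ring_nf
    rw [h2]; ring
  rw [intervalIntegral.integral_congr (fun x _ => key x)]
  rw [intervalIntegral.integral_sub (Continuous.intervalIntegrable (by continuity) 0 p)
    (Continuous.intervalIntegrable (by continuity) 0 p),
    intervalIntegral.integral_const_mul, intervalIntegral.integral_const_mul,
    aux_outer, aux_outer]
  have hep : Real.exp (-p) * Real.exp p = 1 := by rw [← Real.exp_add]; simp
  simp only [Real.exp_zero]
  linear_combination (2 * Real.exp (-t)) * hep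

lemma aux_transfer
    {Ω : Type*} [MeasurableSpace Ω] {P : Measure Ω} [IsProbabilityMeasure P]
    (t : ℝ) (ht : 2 < t)
    (s b : Ω → ℝ) (hsm : Measurable s) (hbm : Measurable b)
    (hindep : IndepFun s b P)
    (hslaw : P.map s = (volume.restrict (Set.Icc (0:ℝ) t)).withDensity
        (fun x => ENNReal.ofReal ((1 - Real.exp (-t))⁻¹ * Real.exp (x - t))))
    (hblaw : P.map b = (volume.restrict (Set.Icc (0:ℝ) t)).withDensity
        (fun x => ENNReal.ofReal ((1 - Real.exp (-t))⁻¹ * Real.exp (-x))))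
    (F : ℝ → ℝ → ℝ) (hF : Measurable (Function.uncurry F)) (C : ℝ)
    (hC : ∀ x ∈ Set.Icc (0:ℝ) t, ∀ y ∈ Set.Icc (0:ℝ) t, |F x y| ≤ C) :
    ∫ ω, F (s ω) (b ω) ∂P =
      ∫ x in Set.Icc (0:ℝ) t, ((1 - Real.exp (-t))⁻¹ * Real.exp (x - t)) *
        ∫ y in Set.Icc (0:ℝ) t, ((1 - Real.exp (-t))⁻¹ * Real.exp (-y)) * F x y := by
  have hc0 : (0:ℝ) < (1 - Real.exp (-t))⁻¹ := by
    have h1 : Real.exp (-t) < 1 := Real.exp_lt_one_iff.mpr (by linarith)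
    have : 0 < 1 - Real.exp (-t) := by linarith
    positivity
  set c : ℝ := (1 - Real.exp (-t))⁻¹ with hc
  set ds : ℝ → ℝ := fun x => c * Real.exp (x - t) with hds
  set db : ℝ → ℝ := fun y => c * Real.exp (-y) with hdb
  have hdsm : Measurable ds := by fun_prop
  have hdbm : Measurable db := by fun_prop
  have hds0 : ∀ x, 0 ≤ ds x := fun x => by positivity
  have hdb0 : ∀ x, 0 ≤ db x := fun x => by positivity
  set μ := (volume.restrict (Set.Icc (0:ℝ) t)).withDensity
    (fun x => ENNReal.ofReal (ds x)) with hμ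
  set ν := (volume.restrict (Set.Icc (0:ℝ) t)).withDensity
    (fun x => ENNReal.ofReal (db x)) with hν
  have hμP : IsProbabilityMeasure μ := hslaw ▸ Measure.isProbabilityMeasure_map hsm.aemeasurable
  have hνP : IsProbabilityMeasure ν := hblaw ▸ Measure.isProbabilityMeasure_map hbm.aemeasurable
  have hbox : ∀ᵐ z ∂(μ.prod ν), z ∈ Set.Icc (0:ℝ) t ×ˢ Set.Icc (0:ℝ) t := by
    have hμc : μ (Set.Icc (0:ℝ) t)ᶜ = 0 := by
      rw [hμ, withDensity_apply _ (measurableSet_Icc.compl),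
        Measure.restrict_restrict measurableSet_Icc.compl]
      simp
    have hνc : ν (Set.Icc (0:ℝ) t)ᶜ = 0 := by
      rw [hν, withDensity_apply _ (measurableSet_Icc.compl),
        Measure.restrict_restrict measurableSet_Icc.compl]
      simp
    have hsub : (Set.Icc (0:ℝ) t ×ˢ Set.Icc (0:ℝ) t)ᶜ ⊆
        ((Set.Icc (0:ℝ) t)ᶜ ×ˢ (Set.univ : Set ℝ)) ∪
          ((Set.univ : Set ℝ) ×ˢ (Set.Icc (0:ℝ) t)ᶜ) := by
      intro z hz
      simp only [Set.mem_compl_iff, Set.mem_prod, not_and] at hz ⊢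
      by_cases h1 : z.1 ∈ Set.Icc (0:ℝ) t
      · right; simp [hz h1]
      · left; simp [h1]
    have h0 : (μ.prod ν) (Set.Icc (0:ℝ) t ×ˢ Set.Icc (0:ℝ) t)ᶜ = 0 := by
      refine measure_mono_null hsub ?_
      refine le_antisymm (le_trans (measure_union_le _ _) ?_) (by positivity)
      rw [Measure.prod_prod, Measure.prod_prod, hμc, hνc]
      simp
    exact ae_iff.2 h0
  have hFm : AEStronglyMeasurable (fun z : ℝ × ℝ => F z.1 z.2) (μ.prod ν) :=
    hF.aestronglyMeasurable
  have hInt : Integrable (fun z : ℝ × ℝ => F z.1 z.2) (μ.prod ν) := by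
    refine Integrable.mono' (integrable_const C) hFm ?_
    filter_upwards [hbox] with z hz
    exact hC z.1 hz.1 z.2 hz.2
  have hmap : P.map (fun ω => (s ω, b ω)) = μ.prod ν := by
    rw [← hslaw, ← hblaw]
    exact (indepFun_iff_map_prod_eq_prod_map_map hsm.aemeasurable hbm.aemeasurable).mp hindep
  have step1 : ∫ ω, F (s ω) (b ω) ∂P = ∫ z : ℝ × ℝ, F z.1 z.2 ∂(μ.prod ν) := by
    rw [← hmap, integral_map (hsm.prodMk hbm).aemeasurable (hmap ▸ hFm)]
  rw [step1, MeasureTheory.integral_prod _ hInt]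
  have hwd : ∀ (d : ℝ → ℝ), Measurable d → (∀ x, 0 ≤ d x) → ∀ (G : ℝ → ℝ),
      ∫ x, G x ∂((volume.restrict (Set.Icc (0:ℝ) t)).withDensity
          (fun x => ENNReal.ofReal (d x)))
        = ∫ x in Set.Icc (0:ℝ) t, d x * G x := by
    intro d hd hd0 G
    have h : (fun x => ENNReal.ofReal (d x)) = (fun x => ((d x).toNNReal : ℝ≥0∞)) := rfl
    rw [h, integral_withDensity_eq_integral_smul hd.real_toNNReal G]
    refine integral_congr_ae (Filter.Eventually.of_forall fun x => ?_)
    simp [NNReal.smul_def, Real.coe_toNNReal _ (hd0 x)]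
  rw [hμ, hwd ds hdsm hds0]
  refine setIntegral_congr_fun measurableSet_Icc fun x _ => ?_
  rw [hν, hwd db hdbm hdb0]

end helpers

/-- **No fixed price gives a constant approximation to the gain from trade.**
Let `t > 2`, `λ = 1/(1 − e^{−t})`, and let `s, b` be independent with
densities `λ e^{x−t}` and `λ e^{−x}` on `[0, t]`. Then for every price `p`,
the gain from trade of the fixed-price mechanism is at most a
`(2 + (t+2)e^{−t}) / (t − 2 + (t+2)e^{−t})` (i.e. `O(1/t)`) fraction of the
optimal gain from trade `E[(b − s)⁺]`. -/
theorem fixed_price_gft_not_constant_approx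
    {Ω : Type*} [MeasurableSpace Ω] {P : Measure Ω} [IsProbabilityMeasure P]
    (t : ℝ) (ht : 2 < t)
    (s b : Ω → ℝ) (hsm : Measurable s) (hbm : Measurable b)
    (hindep : IndepFun s b P)
    (hslaw : P.map s = (volume.restrict (Set.Icc (0:ℝ) t)).withDensity
        (fun x => ENNReal.ofReal ((1 - Real.exp (-t))⁻¹ * Real.exp (x - t))))
    (hblaw : P.map b = (volume.restrict (Set.Icc (0:ℝ) t)).withDensity
        (fun x => ENNReal.ofReal ((1 - Real.exp (-t))⁻¹ * Real.exp (-x))))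
    (p : ℝ) :
    ∫ ω, (b ω - s ω) * (if s ω ≤ p ∧ p ≤ b ω then (1:ℝ) else 0) ∂P
      ≤ ((2 + (t + 2) * Real.exp (-t)) / (t - 2 + (t + 2) * Real.exp (-t))) *
          ∫ ω, max (b ω - s ω) 0 ∂P := by
  have hE1 : Real.exp (-t) < 1 := Real.exp_lt_one_iff.mpr (by linarith)
  have hE0 : (0:ℝ) < Real.exp (-t) := Real.exp_pos _
  have hc0 : (0:ℝ) < (1 - Real.exp (-t))⁻¹ := by
    have : 0 < 1 - Real.exp (-t) := by linarith
    positivity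
  set c : ℝ := (1 - Real.exp (-t))⁻¹ with hc
  set E : ℝ := Real.exp (-t) with hE
  have hden : (0:ℝ) < t - 2 + (t + 2) * E := by nlinarith
  have hRHSnn : 0 ≤ ∫ ω, max (b ω - s ω) 0 ∂P :=
    integral_nonneg fun ω => le_max_right _ _
  have hratio0 : 0 ≤ (2 + (t + 2) * E) / (t - 2 + (t + 2) * E) := by
    apply div_nonneg <;> nlinarith
  -- the RHS expectation
  have hF2m : Measurable (Function.uncurry fun x y : ℝ => max (y - x) 0) :=
    (measurable_snd.sub measurable_fst).max measurable_const
  have hC2 : ∀ x ∈ Set.Icc (0:ℝ) t, ∀ y ∈ Set.Icc (0:ℝ) t,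
      |max (y - x) 0| ≤ t := by
    intro x hx y hy
    rw [abs_of_nonneg (le_max_right _ _)]
    rw [max_le_iff]
    constructor
    · linarith [hx.1, hy.2]
    · linarith [hx.1, hx.2]
  have hR := aux_transfer t ht s b hsm hbm hindep hslaw hblaw
    (fun x y => max (y - x) 0) hF2m t hC2
  have hRval : ∫ ω, max (b ω - s ω) 0 ∂P
      = c ^ 2 * (E * (t - 2 + (t + 2) * E)) := by
    have h1 : ∫ ω, max (b ω - s ω) 0 ∂P
        = ∫ x in Set.Icc (0:ℝ) t, (c * Real.exp (x - t)) *
            ∫ y in Set.Icc (0:ℝ) t, (c * Real.exp (-y)) * max (y - x) 0 := hR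
    rw [h1]
    have h2 : ∀ x ∈ Set.Icc (0:ℝ) t,
        (c * Real.exp (x - t)) *
            ∫ y in Set.Icc (0:ℝ) t, (c * Real.exp (-y)) * max (y - x) 0
          = c ^ 2 * (Real.exp (x - t) *
              (Real.exp (-x) - (t - x + 1) * E)) := by
      intro x hx
      have hi : ∫ y in Set.Icc (0:ℝ) t, (c * Real.exp (-y)) * max (y - x) 0
          = c * (Real.exp (-x) - (t - x + 1) * E) := by
        rw [show (fun y => (c * Real.exp (-y)) * max (y - x) 0)
            = fun y => c * (Real.exp (-y) * max (y - x) 0) by funext y; ring]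
        rw [MeasureTheory.integral_const_mul, aux_inner_rhs t x hx.1 hx.2]
      rw [hi]; ring
    rw [setIntegral_congr_fun measurableSet_Icc h2, MeasureTheory.integral_const_mul,
      MeasureTheory.integral_Icc_eq_integral_Ioc,
      ← intervalIntegral.integral_of_le (by linarith : (0:ℝ) ≤ t), aux_calc_rhs]
  -- the LHS expectation, via transfer
  have hF1m : Measurable (Function.uncurry fun x y : ℝ =>
      (y - x) * (if x ≤ p ∧ p ≤ y then (1:ℝ) else 0)) := by
    apply (measurable_snd.sub measurable_fst).mul
    exact Measurable.ite
      ((measurableSet_le measurable_fst measurable_const).inter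
        (measurableSet_le measurable_const measurable_snd))
      measurable_const measurable_const
  have hC1 : ∀ x ∈ Set.Icc (0:ℝ) t, ∀ y ∈ Set.Icc (0:ℝ) t,
      |(y - x) * (if x ≤ p ∧ p ≤ y then (1:ℝ) else 0)| ≤ t := by
    intro x hx y hy
    by_cases h : x ≤ p ∧ p ≤ y
    · rw [if_pos h, mul_one, abs_le]
      constructor
      · linarith [hx.2, hy.1]
      · linarith [hx.1, hy.2]
    · rw [if_neg h, mul_zero, abs_zero]; linarith [hx.1, hx.2]
  have hL := aux_transfer t ht s b hsm hbm hindep hslaw hblaw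
    (fun x y => (y - x) * (if x ≤ p ∧ p ≤ y then (1:ℝ) else 0)) hF1m t hC1
  have hLeq : ∫ ω, (b ω - s ω) * (if s ω ≤ p ∧ p ≤ b ω then (1:ℝ) else 0) ∂P
      = ∫ x in Set.Icc (0:ℝ) t, (c * Real.exp (x - t)) *
          ∫ y in Set.Icc (0:ℝ) t, (c * Real.exp (-y)) *
            ((y - x) * (if x ≤ p ∧ p ≤ y then (1:ℝ) else 0)) := hL
  by_cases hp0 : 0 ≤ p
  · by_cases hpt : p ≤ t
    · -- main case : 0 ≤ p ≤ t
      have hLval : ∫ ω, (b ω - s ω) * (if s ω ≤ p ∧ p ≤ b ω then (1:ℝ) else 0) ∂P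
          = c ^ 2 * (E * (2 - (p + 2) * Real.exp (-p) + (t + 2) * E
              - (t - p + 2) * Real.exp p * E)) := by
        rw [hLeq]
        have h2 : ∀ x ∈ Set.Icc (0:ℝ) t,
            (c * Real.exp (x - t)) *
              ∫ y in Set.Icc (0:ℝ) t, (c * Real.exp (-y)) *
                ((y - x) * (if x ≤ p ∧ p ≤ y then (1:ℝ) else 0))
            = Set.indicator (Set.Iic p)
                (fun x => c ^ 2 * (Real.exp (x - t) *
                  ((p - x + 1) * Real.exp (-p) - (t - x + 1) * E))) x := by
          intro x hx
          by_cases hxp : x ≤ p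
          · have hi : ∫ y in Set.Icc (0:ℝ) t, (c * Real.exp (-y)) *
                ((y - x) * (if x ≤ p ∧ p ≤ y then (1:ℝ) else 0))
                = c * ((p - x + 1) * Real.exp (-p) - (t - x + 1) * E) := by
              have hfe : (fun y => (c * Real.exp (-y)) *
                  ((y - x) * (if x ≤ p ∧ p ≤ y then (1:ℝ) else 0)))
                  = fun y => Set.indicator (Set.Ici p)
                      (fun y => c * (Real.exp (-y) * (y - x))) y := by
                funext y
                by_cases hpy : p ≤ y
                · rw [if_pos ⟨hxp, hpy⟩, Set.indicator_of_mem (Set.mem_Ici.mpr hpy)]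
                  ring
                · rw [if_neg (fun h => hpy h.2),
                    Set.indicator_of_notMem (fun h => hpy (Set.mem_Ici.mp h))]
                  ring
              rw [hfe, MeasureTheory.setIntegral_indicator measurableSet_Ici]
              have hset : Set.Icc (0:ℝ) t ∩ Set.Ici p = Set.Icc p t := by
                ext y
                simp only [Set.mem_inter_iff, Set.mem_Icc, Set.mem_Ici]
                constructor
                · rintro ⟨⟨_, h2⟩, h3⟩; exact ⟨h3, h2⟩
                · rintro ⟨h1, h2⟩; exact ⟨⟨le_trans hp0 h1, h2⟩, h1⟩
              rw [hset, MeasureTheory.integral_const_mul, aux_inner_seg p t x hpt]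
            rw [hi, Set.indicator_of_mem (Set.mem_Iic.mpr hxp)]
            ring
          · have hi : ∫ y in Set.Icc (0:ℝ) t, (c * Real.exp (-y)) *
                ((y - x) * (if x ≤ p ∧ p ≤ y then (1:ℝ) else 0)) = 0 := by
              have hfe : (fun y => (c * Real.exp (-y)) *
                  ((y - x) * (if x ≤ p ∧ p ≤ y then (1:ℝ) else 0)))
                  = fun _ => (0:ℝ) := by
                funext y
                rw [if_neg (fun h => hxp h.1)]
                ring
              rw [hfe, MeasureTheory.integral_zero]
            rw [hi, Set.indicator_of_notMem (by simpa using hxp)]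
            ring
        rw [setIntegral_congr_fun measurableSet_Icc h2,
          MeasureTheory.setIntegral_indicator measurableSet_Iic]
        have hset2 : Set.Icc (0:ℝ) t ∩ Set.Iic p = Set.Icc 0 p := by
          ext x
          simp only [Set.mem_inter_iff, Set.mem_Icc, Set.mem_Iic]
          constructor
          · rintro ⟨⟨h1, _⟩, h3⟩; exact ⟨h1, h3⟩
          · rintro ⟨h1, h2⟩; exact ⟨⟨h1, le_trans h2 hpt⟩, h2⟩
        rw [hset2, MeasureTheory.integral_const_mul,
          MeasureTheory.integral_Icc_eq_integral_Ioc,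
          ← intervalIntegral.integral_of_le hp0, aux_calc_lhs]
      rw [hLval, hRval]
      have hfinal : (2 + (t + 2) * E) / (t - 2 + (t + 2) * E) *
          (c ^ 2 * (E * (t - 2 + (t + 2) * E))) = c ^ 2 * (E * (2 + (t + 2) * E)) := by
        field_simp
      rw [hfinal]
      have hA : 0 ≤ (p + 2) * Real.exp (-p) := by positivity
      have hB : 0 ≤ (t - p + 2) * Real.exp p * E := by
        have : (0:ℝ) ≤ t - p + 2 := by linarith
        positivity
      have hc2 : (0:ℝ) ≤ c ^ 2 := sq_nonneg c
      apply mul_le_mul_of_nonneg_left _ hc2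
      apply mul_le_mul_of_nonneg_left _ (le_of_lt hE0)
      linarith
    · -- p > t : LHS is zero
      push_neg at hpt
      have hLval : ∫ ω, (b ω - s ω) * (if s ω ≤ p ∧ p ≤ b ω then (1:ℝ) else 0) ∂P = 0 := by
        rw [hLeq]
        have h2 : ∀ x ∈ Set.Icc (0:ℝ) t,
            (c * Real.exp (x - t)) *
              ∫ y in Set.Icc (0:ℝ) t, (c * Real.exp (-y)) *
                ((y - x) * (if x ≤ p ∧ p ≤ y then (1:ℝ) else 0)) = 0 := by
          intro x _
          have hi : ∫ y in Set.Icc (0:ℝ) t, (c * Real.exp (-y)) *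
              ((y - x) * (if x ≤ p ∧ p ≤ y then (1:ℝ) else 0)) = 0 := by
            have h0 : Set.EqOn (fun y => (c * Real.exp (-y)) *
                ((y - x) * (if x ≤ p ∧ p ≤ y then (1:ℝ) else 0)))
                (fun _ => (0:ℝ)) (Set.Icc (0:ℝ) t) := by
              intro y hy
              simp only
              rw [if_neg (fun h => absurd (le_trans h.2 hy.2) (not_le.mpr hpt))]
              ring
            rw [setIntegral_congr_fun measurableSet_Icc h0, MeasureTheory.integral_zero]
          rw [hi]; ring
        rw [setIntegral_congr_fun measurableSet_Icc h2, MeasureTheory.integral_zero]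
      rw [hLval]
      exact mul_nonneg hratio0 hRHSnn
  · -- p < 0 : LHS is zero
    push_neg at hp0
    have hLval : ∫ ω, (b ω - s ω) * (if s ω ≤ p ∧ p ≤ b ω then (1:ℝ) else 0) ∂P = 0 := by
      rw [hLeq]
      have h2 : ∀ x ∈ Set.Icc (0:ℝ) t,
          (c * Real.exp (x - t)) *
            ∫ y in Set.Icc (0:ℝ) t, (c * Real.exp (-y)) *
              ((y - x) * (if x ≤ p ∧ p ≤ y then (1:ℝ) else 0)) = 0 := by
        intro x hx
        have hi : ∫ y in Set.Icc (0:ℝ) t, (c * Real.exp (-y)) *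
            ((y - x) * (if x ≤ p ∧ p ≤ y then (1:ℝ) else 0)) = 0 := by
          have hfe : (fun y => (c * Real.exp (-y)) *
              ((y - x) * (if x ≤ p ∧ p ≤ y then (1:ℝ) else 0)))
              = fun _ => (0:ℝ) := by
            funext y
            rw [if_neg (fun h => absurd (le_trans hx.1 h.1) (not_le.mpr hp0))]
            ring
          rw [hfe, MeasureTheory.integral_zero]
        rw [hi]; ring
      rw [setIntegral_congr_fun measurableSet_Icc h2, MeasureTheory.integral_zero]
    rw [hLval]
    exact mul_nonneg hratio0 hRHSnn
end

section
/- Let b > 0 and let s be a random variable with 0 ≤ s ≤ b almost surely. Let q : [1/e, 1] → ℝ be a measurable function with q(x) ≤ b, P(s ≤ q(x)) = x, and P(s < q(x)) = x for every x ∈ [1/e, 1], and let X be a random variable on [1/e, 1] with probability density g(x) = 1/x, independent of s. Then E[b·𝟙{s ≤ q(X)} + s·𝟙{s > q(X)}] ≥ (1 − 1/e)·b. -/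
open MeasureTheory ProbabilityTheory

/-- **Core computation of the Random-Quantile mechanism (truncated seller).**
Let `b > 0` and let `s` satisfy `0 ≤ s ≤ b` almost surely. Let `q` be a
quantile function of `s` on `[1/e, 1]` with `q(x) ≤ b` there, and let `X` be
a random variable with density `1/x` on `[1/e, 1]`, independent of `s`. Then
`E[b·𝟙{s ≤ q(X)} + s·𝟙{s > q(X)}] ≥ (1 − 1/e)·b`. -/
theorem random_quantile_core
    {Ω : Type*} [MeasurableSpace Ω] {P : Measure Ω} [IsProbabilityMeasure P]
    (b : ℝ) (hb : 0 < b)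
    (s X : Ω → ℝ) (hsm : Measurable s) (hXm : Measurable X)
    (hs_range : ∀ᵐ ω ∂P, 0 ≤ s ω ∧ s ω ≤ b)
    (q : ℝ → ℝ) (hqm : Measurable q)
    (hqb : ∀ x ∈ Set.Icc (Real.exp 1)⁻¹ 1, q x ≤ b)
    (hq1 : ∀ x ∈ Set.Icc (Real.exp 1)⁻¹ 1, P {ω | s ω ≤ q x} = ENNReal.ofReal x)
    (hq2 : ∀ x ∈ Set.Icc (Real.exp 1)⁻¹ 1, P {ω | s ω < q x} = ENNReal.ofReal x)
    (hindep : IndepFun s X P)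
    (hX_law : P.map X
        = (volume.restrict (Set.Icc (Real.exp 1)⁻¹ 1)).withDensity
            (fun x => ENNReal.ofReal x⁻¹)) :
    (1 - (Real.exp 1)⁻¹) * b
      ≤ ∫ ω, (b * (if s ω ≤ q (X ω) then (1:ℝ) else 0)
              + s ω * (if q (X ω) < s ω then (1:ℝ) else 0)) ∂P := by
  have hinv1 : (Real.exp 1)⁻¹ ≤ 1 := by
    rw [inv_le_one_iff₀]; right; exact Real.one_le_exp (by norm_num)
  have hinv0 : (0:ℝ) < (Real.exp 1)⁻¹ := inv_pos.2 (Real.exp_pos 1)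
  -- the trade event
  set A : Set Ω := {ω | s ω ≤ q (X ω)} with hA_def
  have hS : MeasurableSet {p : ℝ × ℝ | p.1 ≤ q p.2} :=
    measurableSet_le measurable_fst (hqm.comp measurable_snd)
  have hA : MeasurableSet A := (hsm.prodMk hXm) hS
  -- law of the pair
  have hmap : P.map (fun ω => (s ω, X ω)) = (P.map s).prod (P.map X) :=
    (indepFun_iff_map_prod_eq_prod_map_map hsm.aemeasurable hXm.aemeasurable).mp hindep
  -- compute P A
  have hPA : P A = ENNReal.ofReal (1 - (Real.exp 1)⁻¹) := by
    have h1 : P A = (P.map (fun ω => (s ω, X ω))) {p : ℝ × ℝ | p.1 ≤ q p.2} := by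
      rw [Measure.map_apply (hsm.prodMk hXm) hS]; rfl
    rw [h1, hmap, Measure.prod_apply_symm hS]
    have h2 : ∀ y : ℝ, (P.map s) ((fun x => (x, y)) ⁻¹' {p : ℝ × ℝ | p.1 ≤ q p.2})
        = P {ω | s ω ≤ q y} := by
      intro y
      have : ((fun x : ℝ => (x, y)) ⁻¹' {p : ℝ × ℝ | p.1 ≤ q p.2}) = Set.Iic (q y) := rfl
      rw [this, Measure.map_apply hsm measurableSet_Iic]; rfl
    simp_rw [h2]
    have hgm : Measurable fun x : ℝ => ENNReal.ofReal x⁻¹ := measurable_inv.ennreal_ofReal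
    rw [hX_law, lintegral_withDensity_eq_lintegral_mul_non_measurable _
      hgm (Filter.Eventually.of_forall fun x => ENNReal.ofReal_lt_top)]
    have h3 : ∫⁻ y in Set.Icc (Real.exp 1)⁻¹ 1,
        ((fun x => ENNReal.ofReal x⁻¹) * fun y => P {ω | s ω ≤ q y}) y ∂volume
        = ∫⁻ _y in Set.Icc (Real.exp 1)⁻¹ 1, (1:ENNReal) ∂volume := by
      refine setLIntegral_congr_fun measurableSet_Icc
        (fun y hy => ?_)
      have hy0 : 0 < y := lt_of_lt_of_le hinv0 hy.1
      simp only [Pi.mul_apply, hq1 y hy]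
      rw [← ENNReal.ofReal_mul (le_of_lt (inv_pos.2 hy0)), inv_mul_cancel₀ (ne_of_gt hy0),
        ENNReal.ofReal_one]
    rw [h3]
    simp [Real.volume_Icc]
  -- lower bound pointwise
  set f : Ω → ℝ := fun ω => b * (if s ω ≤ q (X ω) then (1:ℝ) else 0)
      + s ω * (if q (X ω) < s ω then (1:ℝ) else 0) with hf_def
  have hfm : Measurable f := by
    apply Measurable.add
    · exact (measurable_const.mul (Measurable.ite hA measurable_const measurable_const))
    · exact hsm.mul (Measurable.ite (measurableSet_lt (hqm.comp hXm) hsm)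
        measurable_const measurable_const)
  have hbound : ∀ᵐ ω ∂P, ‖f ω‖ ≤ b := by
    filter_upwards [hs_range] with ω ⟨h0, h1⟩
    by_cases h : s ω ≤ q (X ω)
    · simp only [hf_def, if_pos h, if_neg (not_lt.2 h), mul_one, mul_zero, add_zero]
      rw [Real.norm_eq_abs, abs_of_pos hb]
    · simp only [hf_def, if_neg h, if_pos (lt_of_not_ge h), mul_zero, mul_one, zero_add]
      rw [Real.norm_eq_abs, abs_of_nonneg h0]; exact h1
  have hfint : Integrable f P :=
    Integrable.mono' (integrable_const b) hfm.aestronglyMeasurable hbound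
  have hgint : Integrable (A.indicator fun _ => b) P :=
    (integrable_const b).indicator hA
  have hmono : ∀ᵐ ω ∂P, A.indicator (fun _ => b) ω ≤ f ω := by
    filter_upwards [hs_range] with ω ⟨h0, _⟩
    by_cases h : s ω ≤ q (X ω)
    · rw [Set.indicator_of_mem (show ω ∈ A from h)]
      simp only [hf_def, if_pos h, if_neg (not_lt.2 h), mul_one, mul_zero, add_zero, le_refl]
    · rw [Set.indicator_of_notMem (show ω ∉ A from h)]
      simp only [hf_def, if_neg h, if_pos (lt_of_not_ge h), mul_zero, mul_one, zero_add]
      exact h0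
  have hle := integral_mono_ae hgint hfint hmono
  have hgeq : ∫ ω, A.indicator (fun _ => b) ω ∂P = (1 - (Real.exp 1)⁻¹) * b := by
    rw [integral_indicator_const b hA, measureReal_def, hPA, ENNReal.toReal_ofReal (by linarith)]
    simp [smul_eq_mul]
  rw [hgeq] at hle
  exact hle
end
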